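/- arXiv:0905.4391 — 9 statements merged into one kernel-verified Lean document; each statement's English description precedes it below -/
import Mathlib

section
/- Let n and k be natural numbers with k ≤ n, and let A, B, P : ℝ → Matrix (Fin n) (Fin n) ℝ be differentiable matrix-valued functions of a real parameter t such that for every t: B(t) and A(t) are symmetric, P(t) is symmetric and idempotent (P(t)² = P(t)), A(t)·B(t) = I − P(t), B(t)·A(t) = I − P(t), and A(t)·P(t) = 0 (so that A(t) is the Moore–Penrose pseudoinverse of B(t) and P(t) is the orthogonal projection onto the null space of B(t)). Then the derivative of A satisfies A′(t) = −(P′(t) + A(t)·B′(t))·A(t) − A(t)·P′(t) for every t. -/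
/-- **Differentiation of a matrix pseudoinverse.**
If `A t` is the Moore–Penrose pseudoinverse of the symmetric matrix `B t` and `P t` is the
orthogonal projection onto the null space of `B t` (expressed by the algebraic identities below),
and `A`, `B`, `P` are differentiable (entrywise) with derivatives `A'`, `B'`, `P'`, then
`A' = -(P' + A * B') * A - A * P'`. -/
theorem pseudoinverse_deriv (n k : ℕ) (hk : k ≤ n)
    (A B P A' B' P' : ℝ → Matrix (Fin n) (Fin n) ℝ)
    (hA : ∀ t i j, HasDerivAt (fun s => A s i j) (A' t i j) t)
    (hB : ∀ t i j, HasDerivAt (fun s => B s i j) (B' t i j) t)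
    (hP : ∀ t i j, HasDerivAt (fun s => P s i j) (P' t i j) t)
    (hAsymm : ∀ t, (A t).IsSymm)
    (hBsymm : ∀ t, (B t).IsSymm)
    (hPsymm : ∀ t, (P t).IsSymm)
    (hPidem : ∀ t, P t * P t = P t)
    (hAB : ∀ t, A t * B t = 1 - P t)
    (hBA : ∀ t, B t * A t = 1 - P t)
    (hAP : ∀ t, A t * P t = 0) :
    ∀ t, A' t = -(P' t + A t * B' t) * A t - A t * P' t := by
  intro t
  have key : ∀ (C D C' D' : ℝ → Matrix (Fin n) (Fin n) ℝ),
      (∀ i j, HasDerivAt (fun s => C s i j) (C' t i j) t) →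
      (∀ i j, HasDerivAt (fun s => D s i j) (D' t i j) t) →
      ∀ i j, HasDerivAt (fun s => (C s * D s) i j) ((C' t * D t + C t * D' t) i j) t := by
    intro C D C' D' hC hD i j
    simp only [Matrix.mul_apply, Matrix.add_apply]
    rw [← Finset.sum_add_distrib]
    exact HasDerivAt.fun_sum fun l _ => (hC i l).mul (hD l j)
  have h1 : A' t * B t + A t * B' t = -(P' t) := by
    ext i j
    have d1 := key A B A' B' (hA t) (hB t) i j
    have d2 : HasDerivAt (fun s => (A s * B s) i j) ((-(P' t)) i j) t := by
      have he : (fun s => (A s * B s) i j) = fun s => (1 : Matrix (Fin n) (Fin n) ℝ) i j - P s i j := by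
        funext s; rw [hAB s]; simp [Matrix.sub_apply]
      rw [he]
      simpa using (hasDerivAt_const t ((1 : Matrix (Fin n) (Fin n) ℝ) i j)).fun_sub (hP t i j)
    exact d1.unique d2
  have h2 : A' t * P t + A t * P' t = 0 := by
    ext i j
    have d1 := key A P A' P' (hA t) (hP t) i j
    have d2 : HasDerivAt (fun s => (A s * P s) i j) ((0 : Matrix (Fin n) (Fin n) ℝ) i j) t := by
      have he : (fun s => (A s * P s) i j) = fun _ => (0 : Matrix (Fin n) (Fin n) ℝ) i j := by
        funext s; rw [hAP s]
      rw [he]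
      simpa using hasDerivAt_const t ((0 : Matrix (Fin n) (Fin n) ℝ) i j)
    exact d1.unique d2
  have hA'B : A' t * B t = -(P' t) - A t * B' t := by
    linear_combination (norm := noncomm_ring) h1
  have hA'P : A' t * P t = -(A t * P' t) := by
    linear_combination (norm := noncomm_ring) h2
  calc A' t = A' t * (B t * A t + P t) := by rw [hBA]; noncomm_ring
    _ = (A' t * B t) * A t + A' t * P t := by noncomm_ring
    _ = (-(P' t) - A t * B' t) * A t + -(A t * P' t) := by rw [hA'B, hA'P]
    _ = -(P' t + A t * B' t) * A t - A t * P' t := by noncomm_ring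
end

section
/- Let G be a finite connected simple graph on n vertices with distinguished vertices v_in ≠ v_out such that the induced subgraph G − v_out is connected. If G is not bipartite, then the affine span H in ℝ^V of the set { tr_ω : ω a proper walk from v_in to v_out } has dimension n − 1. -/
open scoped Classical

noncomputable section

/-- The trace of a walk: the number of occurrences of each vertex along the walk,
viewed as a vector in `ℝ^V`. -/
def trace {V : Type*} [DecidableEq V] {G : SimpleGraph V} {u v : V} (ω : G.Walk u v) : V → ℝ :=
  fun x => (ω.support.count x : ℝ)

/-- A walk from `vin` to `vout` is proper if it visits `vout` exactly once
(namely as its final vertex). -/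
def IsProper {V : Type*} [DecidableEq V] {G : SimpleGraph V} {vin vout : V}
    (ω : G.Walk vin vout) : Prop :=
  ω.support.count vout = 1

/-- The set of traces of proper walks from `vin` to `vout`, as vectors in `ℝ^V`. -/
def traceSet {V : Type*} [DecidableEq V] (G : SimpleGraph V) (vin vout : V) : Set (V → ℝ) :=
  {f | ∃ ω : G.Walk vin vout, IsProper ω ∧ f = trace ω}

/-- `Ψ(G)`: the relative interior (interior with respect to the affine span) of the convex
hull of the traces of proper walks from `vin` to `vout`. -/
def Psi {V : Type*} [Fintype V] [DecidableEq V] (G : SimpleGraph V) (vin vout : V) :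
    Set (V → ℝ) :=
  intrinsicInterior ℝ (convexHull ℝ (traceSet G vin vout))

/-- The matrix `M_β` associated to a graph `G` with distinguished vertices `vin, vout`
and vertex weights `β`. -/
def Mmat {V : Type*} [Fintype V] [DecidableEq V] (G : SimpleGraph V) (vin vout : V)
    (β : V → ℝ) : Matrix V V ℝ :=
  fun v w =>
    if (v = vout ∧ w = vout) ∨ (v = vin ∧ w = vout) then 1
    else if G.Adj v w ∧ v ≠ vout ∧ w ≠ vout then
      β v / ∑ u ∈ Finset.univ.filter (fun u => G.Adj u w), β u
    else 0

/-- The equation `τ_ρ = r` is solvable on `G`: there is a positive vertex-weight function `β`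
with `M_β r = r` and `r(vout) = 1`. -/
def Solvable {V : Type*} [Fintype V] [DecidableEq V] (G : SimpleGraph V) (vin vout : V)
    (r : V → ℝ) : Prop :=
  ∃ β : V → ℝ, (∀ v, 0 < β v) ∧ (Mmat G vin vout β).mulVec r = r ∧ r vout = 1

namespace AuxNotBip

open SimpleGraph

variable {V : Type*} [DecidableEq V] {G : SimpleGraph V}

def evec {V : Type*} [DecidableEq V] (a : V) : V → ℝ := fun z => if z = a then 1 else 0

lemma sum_count {V : Type*} [Fintype V] [DecidableEq V] (l : List V) :
    ∑ z : V, l.count z = l.length := by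
  induction l with
  | nil => simp
  | cons a l ih =>
    simp only [List.count_cons, List.length_cons, Finset.sum_add_distrib, ih]
    simp [Finset.sum_ite_eq' Finset.univ a]

lemma count_support_concat {u x vout : V} (P : G.Walk u x) (h : G.Adj x vout)
    (hP : vout ∉ P.support) : (P.concat h).support.count vout = 1 := by
  rw [Walk.support_concat, List.count_append,
    List.count_eq_zero.mpr hP]
  simp

lemma tail_count_of_count {vout x : V} (hx : x ≠ vout) (Q : G.Walk x vout)
    (hQ : Q.support.count vout = 1) : Q.support.tail.count vout = 1 := by
  rw [Q.support_eq_cons, List.count_cons, if_neg (by simpa using hx)] at hQ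
  simpa using hQ

lemma isProper_append {vin vout x : V} (hx : x ≠ vout) (P : G.Walk vin x)
    (hP : vout ∉ P.support) (Q : G.Walk x vout) (hQ : Q.support.count vout = 1) :
    IsProper (P.append Q) := by
  unfold IsProper
  rw [Walk.support_append, List.count_append, List.count_eq_zero.mpr hP, Nat.zero_add]
  exact tail_count_of_count hx Q hQ

lemma trace_detour {vin vout x y : V} (P : G.Walk vin x) (Q : G.Walk x vout)
    (hxy : G.Adj x y) :
    trace (P.append (Walk.cons hxy (Walk.cons hxy.symm Q)))
      = trace (P.append Q) + (evec x + evec y) := by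
  have h2 : (Walk.cons hxy (Walk.cons hxy.symm Q)).support.tail
      = y :: x :: Q.support.tail := by
    rw [Walk.support_cons, List.tail_cons, Walk.support_cons]
    exact congrArg (y :: ·) Q.support_eq_cons
  funext z
  simp only [trace, Pi.add_apply, Walk.support_append, List.count_append, h2,
    List.count_cons, evec]
  push_cast
  by_cases hzx : z = x <;> by_cases hzy : z = y
  · subst hzx; subst hzy; simp; ring
  · subst hzx; simp [hzy, Ne.symm hzy]; ring
  · subst hzy; simp [hzx, Ne.symm hzx]; ring
  · simp [hzx, hzy, Ne.symm hzx, Ne.symm hzy]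

lemma parity_sign {vout : V} {D : Submodule ℝ (V → ℝ)}
    (hD : ∀ x y : V, x ≠ vout → y ≠ vout → G.Adj x y → evec x + evec y ∈ D) :
    ∀ {a b : {x : V | x ≠ vout}} (p : (G.induce {x | x ≠ vout}).Walk a b),
      evec (a : V) + ((-1 : ℝ) ^ (p.length + 1)) • evec (b : V) ∈ D := by
  intro a b p
  induction p with
  | nil => simpa using D.zero_mem
  | @cons a c b h q ih =>
    have h1 : evec (a : V) + evec (c : V) ∈ D := hD a c a.2 c.2 h
    have h3 := D.sub_mem h1 ih
    have heq : evec (a : V) + (-1 : ℝ) ^ ((Walk.cons h q).length + 1) • evec (b : V)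
        = (evec (a : V) + evec (c : V))
          - (evec (c : V) + (-1 : ℝ) ^ (q.length + 1) • evec (b : V)) := by
      rw [Walk.length_cons]
      rw [show q.length + 1 + 1 = (q.length + 1) + 1 from rfl, pow_succ]
      module
    rw [heq]; exact h3

end AuxNotBip

open AuxNotBip SimpleGraph

/-- If `G` is connected, `G - vout` is connected and `G` is not bipartite, then the affine
span of the traces of proper walks has dimension `n - 1`. -/
theorem affineSpan_traces_dim_not_bipartite (n : ℕ) {V : Type*} [Fintype V] [DecidableEq V]
    (hcard : Fintype.card V = n) (G : SimpleGraph V) (hG : G.Connected)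
    (vin vout : V) (hne : vin ≠ vout)
    (hconn : (G.induce {x | x ≠ vout}).Connected)
    (hnbip : ¬ G.Colorable 2) :
    Module.finrank ℝ (affineSpan ℝ (traceSet G vin vout)).direction = n - 1 := by
  classical
  subst hcard
  set S : Set V := {x | x ≠ vout} with hSdef
  set D := (affineSpan ℝ (traceSet G vin vout)).direction with hDdef
  -- a neighbour of vout
  obtain ⟨w0, hw0⟩ : ∃ w, G.Adj vout w := by
    obtain ⟨p⟩ := hG.preconnected vout vin
    cases p with
    | nil => exact absurd rfl hne.symm
    | cons h _ => exact ⟨_, h⟩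
  have hw0ne : w0 ≠ vout := hw0.ne'
  let w0s : S := ⟨w0, hw0ne⟩
  let x₀ : S := ⟨vin, hne⟩
  let emb : (G.induce S) ↪g G := SimpleGraph.Embedding.induce S
  let W : ∀ a : S, (G.induce S).Walk x₀ a := fun a => (hconn.preconnected x₀ a).some
  have hmapsupp : ∀ {a b : S} (p : (G.induce S).Walk a b),
      vout ∉ (p.map emb.toHom).support := by
    intro a b p hmem
    rw [Walk.support_map] at hmem
    obtain ⟨c, _, hc2⟩ := List.mem_map.mp hmem
    exact c.2 hc2
  have hdiff : ∀ f g, f ∈ traceSet G vin vout → g ∈ traceSet G vin vout → f - g ∈ D := by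
    intro f g hf hg
    exact AffineSubspace.vsub_mem_direction (mem_affineSpan ℝ hf) (mem_affineSpan ℝ hg)
  -- F1 : detour vectors
  have hF1 : ∀ x y : V, x ≠ vout → y ≠ vout → G.Adj x y → evec x + evec y ∈ D := by
    intro x y hx hy hxy
    let a : S := ⟨x, hx⟩
    let P : G.Walk vin x := (W a).map emb.toHom
    have hP : vout ∉ P.support := hmapsupp _
    let Q : G.Walk x vout := ((hconn.preconnected a w0s).some.map emb.toHom).concat hw0.symm
    have hQ : Q.support.count vout = 1 := count_support_concat _ _ (hmapsupp _)
    have h1 : IsProper (P.append Q) := isProper_append hx P hP Q hQ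
    have h2 : IsProper (P.append (Walk.cons hxy (Walk.cons hxy.symm Q))) := by
      apply isProper_append hx P hP
      rw [Walk.support_cons, List.count_cons, Walk.support_cons, List.count_cons]
      simp [hQ, hx, hy, Ne.symm hx, Ne.symm hy]
    have hd := hdiff _ _ ⟨_, h2, rfl⟩ ⟨_, h1, rfl⟩
    rw [trace_detour P Q hxy] at hd
    simpa using hd
  -- parity pair
  have hbase : ∃ ω : G.Walk vin vout, IsProper ω :=
    ⟨((W w0s).map emb.toHom).concat hw0.symm, count_support_concat _ _ (hmapsupp _)⟩
  have hpair : ∃ (ω1 ω2 : G.Walk vin vout), IsProper ω1 ∧ IsProper ω2 ∧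
      ((ω1.length + ω2.length : ℕ) : ZMod 2) = 1 := by
    by_cases hcase : ∃ a b : S, (G.induce S).Adj a b ∧
        (((W a).length : ZMod 2) = ((W b).length : ZMod 2))
    · obtain ⟨a, b, hab, hpar⟩ := hcase
      obtain ⟨ω0, hω0⟩ := hbase
      let C : (G.induce S).Walk x₀ x₀ := (W a).append (Walk.cons hab (W b).reverse)
      let ω2 : G.Walk vin vout := (C.map emb.toHom).append ω0
      refine ⟨ω0, ω2, hω0, ?_, ?_⟩
      · show ((C.map emb.toHom).append ω0).support.count vout = 1
        erw [Walk.support_append, List.count_append, List.count_eq_zero.mpr (hmapsupp _),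
          Nat.zero_add]
        exact tail_count_of_count hne ω0 hω0
      · have hlen : ω2.length = ((W a).length + ((W b).length + 1)) + ω0.length := by
          show ((C.map emb.toHom).append ω0).length = _
          erw [Walk.length_append, Walk.length_map]
          show ((W a).append (Walk.cons hab (W b).reverse)).length + ω0.length = _
          rw [Walk.length_append, Walk.length_cons, Walk.length_reverse]
        have hcast : ((ω0.length + ω2.length : ℕ) : ZMod 2)
            = (ω0.length : ZMod 2) + (((W a).length : ZMod 2)
              + (((W b).length : ZMod 2) + 1) + (ω0.length : ZMod 2)) := by
          rw [hlen]; push_cast; ring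
        rw [hcast]
        have key : ∀ p q r : ZMod 2, p = q → r + (p + (q + 1) + r) = 1 := by decide
        exact key _ _ _ hpar
    · by_cases hcase2 : ∃ a b : S, G.Adj ↑a vout ∧ G.Adj ↑b vout ∧
          (((W a).length : ZMod 2) ≠ ((W b).length : ZMod 2))
      · obtain ⟨a, b, ha, hb, hab⟩ := hcase2
        refine ⟨((W a).map emb.toHom).concat ha, ((W b).map emb.toHom).concat hb,
          count_support_concat _ _ (hmapsupp _), count_support_concat _ _ (hmapsupp _), ?_⟩
        have hla : (((W a).map emb.toHom).concat ha).length = (W a).length + 1 := by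
          erw [Walk.length_concat, Walk.length_map]
        have hlb : (((W b).map emb.toHom).concat hb).length = (W b).length + 1 := by
          erw [Walk.length_concat, Walk.length_map]
        have hcast : (((((W a).map emb.toHom).concat ha).length
              + ((((W b).map emb.toHom).concat hb)).length : ℕ) : ZMod 2)
            = (((W a).length : ZMod 2) + 1) + (((W b).length : ZMod 2) + 1) := by
          rw [hla, hlb]; push_cast; ring
        erw [hcast]
        have key : ∀ p q : ZMod 2, p ≠ q → (p + 1) + (q + 1) = 1 := by decide
        exact key _ _ hab
      · exfalso
        push_neg at hcase hcase2
        have hvalid : ∀ {u v : V}, G.Adj u v →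
            (fun z => if h : z = vout then (((W w0s).length : ZMod 2) + 1)
              else ((W ⟨z, h⟩).length : ZMod 2)) u
            ≠ (fun z => if h : z = vout then (((W w0s).length : ZMod 2) + 1)
              else ((W ⟨z, h⟩).length : ZMod 2)) v := by
          intro u v huv
          by_cases hu : u = vout <;> by_cases hv : v = vout
          · exact absurd (hu ▸ hv ▸ huv) (G.irrefl)
          · have heq : ((W ⟨v, hv⟩).length : ZMod 2) = ((W w0s).length : ZMod 2) :=
              hcase2 ⟨v, hv⟩ w0s (by rw [← hu]; exact huv.symm) hw0.symm
            simp only [dif_pos hu, dif_neg hv, heq]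
            have key : ∀ p : ZMod 2, p + 1 ≠ p := by decide
            exact key _
          · have heq : ((W ⟨u, hu⟩).length : ZMod 2) = ((W w0s).length : ZMod 2) :=
              hcase2 ⟨u, hu⟩ w0s (by rw [← hv]; exact huv) hw0.symm
            simp only [dif_neg hu, dif_pos hv, heq]
            have key : ∀ p : ZMod 2, p ≠ p + 1 := by decide
            exact key _
          · have hadj : (G.induce S).Adj ⟨u, hu⟩ ⟨v, hv⟩ := huv
            have := hcase ⟨u, hu⟩ ⟨v, hv⟩ hadj
            simpa only [dif_neg hu, dif_neg hv] using this
        have col : G.Coloring (ZMod 2) := SimpleGraph.Coloring.mk _ hvalid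
        have := col.colorable
        rw [ZMod.card] at this
        exact hnbip this
  obtain ⟨ω1, ω2, hp1, hp2, hodd⟩ := hpair
  have hp1' : ω1.support.count vout = 1 := hp1
  have hp2' : ω2.support.count vout = 1 := hp2
  set cz : V → ℤ := fun z => (ω2.support.count z : ℤ) - (ω1.support.count z : ℤ) with hcz
  have hc0 : cz vout = 0 := by rw [hcz]; simp [hp1', hp2']
  have hcmem : (fun z => (cz z : ℝ)) ∈ D := by
    have hd := hdiff _ _ ⟨ω2, hp2, rfl⟩ ⟨ω1, hp1, rfl⟩
    have : (fun z => (cz z : ℝ)) = trace ω2 - trace ω1 := by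
      funext z; rw [hcz]; push_cast; simp [trace]
    rw [this]; exact hd
  have hsum : ((∑ z, cz z : ℤ) : ZMod 2) = 1 := by
    have hs : (∑ z, cz z : ℤ) = (ω2.support.length : ℤ) - (ω1.support.length : ℤ) := by
      rw [hcz]
      rw [Finset.sum_sub_distrib]
      rw [← Nat.cast_sum, ← Nat.cast_sum, sum_count, sum_count]
    rw [hs, Walk.length_support, Walk.length_support]
    push_cast
    push_cast at hodd
    have key : ∀ p q : ZMod 2, p + q = 1 → q + 1 - (p + 1) = 1 := by decide
    exact key _ _ hodd
  -- sign function
  set ε : V → ℤ := fun z =>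
    if h : z = vout then 1
    else (-1) ^ ((hconn.preconnected ⟨z, h⟩ x₀).some.length + 1) with hε
  have hεD : ∀ z, z ≠ vout → evec z + ((ε z : ℝ)) • evec vin ∈ D := by
    intro z h
    have hps := parity_sign (G := G) (vout := vout) hF1
      ((hconn.preconnected ⟨z, h⟩ x₀).some)
    have hεz : (ε z : ℝ)
        = (-1 : ℝ) ^ ((hconn.preconnected ⟨z, h⟩ x₀).some.length + 1) := by
      rw [hε]; simp only [dif_neg h, Int.cast_pow, Int.cast_neg, Int.cast_one]
    rw [hεz]; exact hps
  have hεodd : ∀ z, ((ε z : ZMod 2)) = 1 := by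
    intro z
    rw [hε]
    by_cases h : z = vout
    · simp [h]
    · simp only [dif_neg h, Int.cast_pow, Int.cast_neg, Int.cast_one]
      rw [show (-1 : ZMod 2) = 1 by decide, one_pow]
  -- e_vin ∈ D
  have hvinD : evec vin ∈ D := by
    have hsum1 : (∑ z, (cz z : ℝ) • (evec z + (ε z : ℝ) • evec vin)) ∈ D := by
      apply Submodule.sum_mem
      intro z _
      by_cases h : z = vout
      · subst h; rw [hc0]; simp
      · exact D.smul_mem _ (hεD z h)
    have hexpand : (∑ z, (cz z : ℝ) • (evec z + (ε z : ℝ) • evec vin))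
        = (fun z => (cz z : ℝ)) + (∑ z, (cz z : ℝ) * (ε z : ℝ)) • evec vin := by
      rw [show (∑ z, (cz z : ℝ) • (evec z + (ε z : ℝ) • evec vin))
          = (∑ z, (cz z : ℝ) • evec z) + (∑ z, ((cz z : ℝ) * (ε z : ℝ)) • evec vin) by
        rw [← Finset.sum_add_distrib]
        refine Finset.sum_congr rfl fun z _ => by rw [smul_add, smul_smul]]
      congr 1
      · funext w
        rw [Finset.sum_apply]
        simp only [Pi.smul_apply, evec, smul_eq_mul, mul_ite, mul_one, mul_zero]
        rw [Finset.sum_ite_eq Finset.univ w (fun z => (cz z : ℝ))]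
        simp
      · rw [Finset.sum_smul]
    rw [hexpand] at hsum1
    have hsmem : (∑ z, (cz z : ℝ) * (ε z : ℝ)) • evec vin ∈ D := by
      have := D.sub_mem hsum1 hcmem
      simpa using this
    have hszR : (∑ z, (cz z : ℝ) * (ε z : ℝ)) = ((∑ z, cz z * ε z : ℤ) : ℝ) := by
      push_cast; ring
    have hodd2 : ((∑ z, cz z * ε z : ℤ) : ZMod 2) = 1 := by
      push_cast
      have : (∑ z, ((cz z : ZMod 2) * (ε z : ZMod 2))) = ∑ z, (cz z : ZMod 2) := by
        refine Finset.sum_congr rfl fun z _ => by rw [hεodd z, mul_one]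
      rw [this]
      push_cast at hsum
      exact hsum
    have hne0 : (∑ z, cz z * ε z : ℤ) ≠ 0 := by
      intro h
      rw [h] at hodd2
      simp at hodd2
    have hne0R : (∑ z, (cz z : ℝ) * (ε z : ℝ)) ≠ 0 := by
      rw [hszR]; exact_mod_cast hne0
    have := D.smul_mem (∑ z, (cz z : ℝ) * (ε z : ℝ))⁻¹ hsmem
    rwa [smul_smul, inv_mul_cancel₀ hne0R, one_smul] at this
  have hevec : ∀ z, z ≠ vout → evec z ∈ D := by
    intro z h
    have h1 := hεD z h
    have h2 := D.sub_mem h1 (D.smul_mem ((ε z : ℝ)) hvinD)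
    simpa using h2
  -- identify D with the kernel of evaluation at vout
  have hDK : D = LinearMap.ker (LinearMap.proj (R := ℝ) (φ := fun _ : V => ℝ) vout) := by
    apply le_antisymm
    · rw [hDdef, direction_affineSpan]
      rw [vectorSpan_def]
      apply Submodule.span_le.mpr
      rintro f hf
      obtain ⟨g1, hg1, g2, hg2, rfl⟩ := Set.mem_vsub.mp hf
      obtain ⟨ωa, hpa, rfl⟩ := hg1
      obtain ⟨ωb, hpb, rfl⟩ := hg2
      have hpa' : ωa.support.count vout = 1 := hpa
      have hpb' : ωb.support.count vout = 1 := hpb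
      simp [LinearMap.mem_ker, trace, hpa', hpb']
    · intro f hf
      have hf0 : f vout = 0 := hf
      have hrep : f = ∑ z, f z • evec z := by
        funext w
        rw [Finset.sum_apply]
        simp only [Pi.smul_apply, evec, smul_eq_mul, mul_ite, mul_one, mul_zero]
        rw [Finset.sum_ite_eq Finset.univ w f]
        simp
      rw [hrep]
      apply Submodule.sum_mem
      intro z _
      by_cases h : z = vout
      · subst h; rw [hf0]; simp
      · exact D.smul_mem _ (hevec z h)
  rw [hDK]
  have hr := LinearMap.finrank_range_add_finrank_ker
    (LinearMap.proj (R := ℝ) (φ := fun _ : V => ℝ) vout)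
  have hrange : LinearMap.range (LinearMap.proj (R := ℝ) (φ := fun _ : V => ℝ) vout) = ⊤ :=
    LinearMap.range_eq_top.mpr (fun c => ⟨fun _ => c, rfl⟩)
  rw [hrange, finrank_top, Module.finrank_self] at hr
  have hpi : Module.finrank ℝ (V → ℝ) = Fintype.card V := Module.finrank_pi ℝ
  omega


end
end

section
/- Let G be a finite connected simple graph on n vertices with distinguished vertices v_in ≠ v_out such that the induced subgraph G − v_out is connected. If G is bipartite, then the affine span H in ℝ^V of the set { tr_ω : ω a proper walk from v_in to v_out } has dimension n − 2. -/
open scoped Classical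

noncomputable section

section Aux
set_option linter.unusedSectionVars false
variable {V : Type*} [Fintype V] [DecidableEq V] {G : SimpleGraph V}

lemma trace_append {u v w : V} (p : G.Walk u v) (q : G.Walk v w) :
    trace (p.append q) = trace p + trace q - Pi.single v 1 := by
  funext x
  simp only [trace, Pi.add_apply, Pi.sub_apply]
  rw [SimpleGraph.Walk.support_append, List.count_append]
  conv_rhs => rw [q.support_eq_cons]
  rw [List.count_cons]
  push_cast
  by_cases h : x = v <;> simp [Pi.single_apply, h, Ne.symm] <;> ring

lemma trace_reverse {u v : V} (p : G.Walk u v) : trace p.reverse = trace p := by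
  funext x
  simp [trace, SimpleGraph.Walk.support_reverse, List.count_reverse]

lemma sum_count_mul (σ : V → ℝ) (l : List V) :
    ∑ x, (l.count x : ℝ) * σ x = (l.map σ).sum := by
  induction l with
  | nil => simp
  | cons a l ih =>
    simp only [List.map_cons, List.sum_cons, ← ih]
    have : ∀ x : V, ((a :: l).count x : ℝ) * σ x
        = (l.count x : ℝ) * σ x + (if x = a then σ x else 0) := by
      intro x
      rw [List.count_cons]
      by_cases h : x = a <;> simp [h, Ne.symm] <;> ring
    simp only [this, Finset.sum_add_distrib, Finset.sum_ite_eq' Finset.univ a σ,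
      Finset.mem_univ, if_true]
    ring

lemma walk_sigma_sum (σ : V → ℝ) (hσ : ∀ {a b : V}, G.Adj a b → σ a = -σ b)
    {u v : V} (p : G.Walk u v) : (p.support.map σ).sum = (σ u + σ v) / 2 := by
  induction p with
  | nil => simp
  | @cons a b c h p ih =>
    simp only [SimpleGraph.Walk.support_cons, List.map_cons, List.sum_cons, ih]
    rw [hσ h]; ring

lemma sum_sigma_trace (σ : V → ℝ) (hσ : ∀ {a b : V}, G.Adj a b → σ a = -σ b)
    {u v : V} (p : G.Walk u v) : ∑ x, σ x * trace p x = (σ u + σ v) / 2 := by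
  have := sum_count_mul σ p.support
  rw [walk_sigma_sum σ hσ p] at this
  rw [← this]
  exact Finset.sum_congr rfl fun x _ => by rw [trace]; ring

lemma mem_of_walk (W : Submodule ℝ (V → ℝ)) (σ : V → ℝ)
    (hσ2 : ∀ x, σ x * σ x = 1)
    {s : Set V}
    (hedge : ∀ a b : V, G.Adj a b → a ∈ s → b ∈ s →
        Pi.single a (1:ℝ) + Pi.single b 1 ∈ W)
    (hflip : ∀ {a b : V}, G.Adj a b → σ a = -σ b)
    {u v : s} (p : (G.induce s).Walk u v) :
    Pi.single (u:V) (1:ℝ) - (σ u * σ v) • (Pi.single (v:V) 1 : V → ℝ) ∈ W := by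
  induction p with
  | nil =>
    rename_i a
    have : Pi.single (a:V) (1:ℝ) - (σ (a:V) * σ (a:V)) • (Pi.single (a:V) 1 : V → ℝ) = 0 := by
      rw [hσ2]; simp
    rw [this]; exact W.zero_mem
  | @cons a b c h p ih =>
    have hadj : G.Adj (a:V) (b:V) := h
    have h1 := hedge a b hadj a.2 b.2
    have key : Pi.single (a:V) (1:ℝ) - (σ a * σ c) • (Pi.single (c:V) 1 : V → ℝ)
        = (Pi.single (a:V) (1:ℝ) + Pi.single (b:V) 1)
          - (Pi.single (b:V) (1:ℝ) - (σ b * σ c) • (Pi.single (c:V) 1 : V → ℝ)) := by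
      rw [hflip hadj]
      module
    rw [key]
    exact W.sub_mem h1 ih

end Aux

/-- If `G` is connected, `G - vout` is connected and `G` is bipartite, then the affine
span of the traces of proper walks has dimension `n - 2`. -/
theorem affineSpan_traces_dim_bipartite (n : ℕ) {V : Type*} [Fintype V] [DecidableEq V]
    (hcard : Fintype.card V = n) (G : SimpleGraph V) (hG : G.Connected)
    (vin vout : V) (hne : vin ≠ vout)
    (hconn : (G.induce {x | x ≠ vout}).Connected)
    (hbip : G.Colorable 2) :
    Module.finrank ℝ (affineSpan ℝ (traceSet G vin vout)).direction = n - 2 := by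
  classical
  subst hcard
  obtain ⟨C⟩ := hbip
  set σ : V → ℝ := fun x => if C x = 0 then 1 else -1 with hσdef
  have hσ2 : ∀ x, σ x * σ x = 1 := by
    intro x; by_cases h : C x = 0 <;> simp [hσdef, h]
  have hσne : ∀ x, σ x ≠ 0 := by
    intro x; by_cases h : C x = 0 <;> simp [hσdef, h]
  have hflip : ∀ {a b : V}, G.Adj a b → σ a = -σ b := by
    intro a b h
    have hC := C.valid h
    have h2 : ∀ y : Fin 2, y = 0 ∨ y = 1 := by decide
    rcases h2 (C a) with ha | ha <;> rcases h2 (C b) with hb | hb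
    · exact absurd (ha.trans hb.symm) hC
    · simp [hσdef, ha, hb]
    · simp [hσdef, ha, hb]
    · exact absurd (ha.trans hb.symm) hC
  set S : Set (V → ℝ) := traceSet G vin vout with hSdef
  -- the base proper walk
  obtain ⟨w0⟩ := hG.preconnected vin vout
  set p0 : G.Path vin vout := w0.toPath with hp0def
  have hp0 : IsProper p0.1 :=
    List.count_eq_one_of_mem p0.2.support_nodup p0.1.end_mem_support
  have hp0mem : trace p0.1 ∈ S := ⟨p0.1, hp0, rfl⟩
  have hp0v : trace p0.1 vout = 1 := by
    rw [trace, hp0]; norm_num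
  -- the two linear constraints
  let φ2 : (V → ℝ) →ₗ[ℝ] ℝ :=
    { toFun := fun f => ∑ x, σ x * f x
      map_add' := by intro f g; simp [mul_add, Finset.sum_add_distrib]
      map_smul' := by
        intro c f
        simp only [Pi.smul_apply, smul_eq_mul, RingHom.id_apply, Finset.mul_sum]
        exact Finset.sum_congr rfl fun x _ => by ring }
  let Φ : (V → ℝ) →ₗ[ℝ] ℝ × ℝ := (LinearMap.proj vout).prod φ2
  have hΦS : ∀ f ∈ S, Φ f = (1, (σ vin + σ vout) / 2) := by
    rintro f ⟨ω, hω, rfl⟩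
    have h1 : trace ω vout = 1 := by rw [trace, hω]; norm_num
    have h2 := sum_sigma_trace σ hflip ω
    simp only [Φ, φ2, LinearMap.prod_apply, LinearMap.proj_apply, Function.prod,
      LinearMap.coe_mk, AddHom.coe_mk, Prod.mk.injEq]
    exact ⟨h1, h2⟩
  have hspan_le : vectorSpan ℝ S ≤ LinearMap.ker Φ := by
    rw [vectorSpan_def, Submodule.span_le]
    intro d hd
    rw [Set.mem_vsub] at hd
    obtain ⟨f, hf, g, hg, rfl⟩ := hd
    simp only [SetLike.mem_coe, LinearMap.mem_ker, vsub_eq_sub, map_sub,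
      hΦS f hf, hΦS g hg, sub_self]
  have hsurj : Function.Surjective Φ := by
    intro z
    set c : ℝ := (z.2 - z.1 * σ vout) / σ vin with hc
    set f : V → ℝ := z.1 • (Pi.single vout 1 : V → ℝ) + c • (Pi.single vin 1 : V → ℝ) with hf
    have hs1 : ∀ y : V, ∑ x, σ x * (Pi.single y 1 : V → ℝ) x = σ y := by
      intro y
      have : ∀ x : V, σ x * (Pi.single y 1 : V → ℝ) x = if x = y then σ x else 0 := by
        intro x
        by_cases h : x = y <;> simp [Pi.single_apply, h]
      simp [this, Finset.sum_ite_eq' Finset.univ y σ]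
    have h2 : φ2 f = z.1 * σ vout + c * σ vin := by
      show ∑ x, σ x * f x = _
      have e : ∀ x : V, σ x * f x
          = z.1 * (σ x * (Pi.single vout 1 : V → ℝ) x)
            + c * (σ x * (Pi.single vin 1 : V → ℝ) x) := by
        intro x; simp only [hf, Pi.add_apply, Pi.smul_apply, smul_eq_mul]; ring
      rw [Finset.sum_congr rfl fun x _ => e x, Finset.sum_add_distrib,
        ← Finset.mul_sum, ← Finset.mul_sum, hs1, hs1]
    have hvv : vout ≠ vin := Ne.symm hne
    have h1 : f vout = z.1 := by
      simp [hf, Pi.single_apply, hvv]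
    refine ⟨f, ?_⟩
    have hΦf : Φ f = (f vout, φ2 f) := rfl
    rw [hΦf, h1, h2, hc, div_mul_cancel₀ _ (hσne vin)]
    have : z.1 * σ vout + (z.2 - z.1 * σ vout) = z.2 := by ring
    rw [this]
  have hker : Module.finrank ℝ (LinearMap.ker Φ) = Fintype.card V - 2 := by
    have h := Φ.finrank_range_add_finrank_ker
    rw [LinearMap.range_eq_top.mpr hsurj, finrank_top, Module.finrank_prod,
      Module.finrank_self, Module.finrank_fintype_fun_eq_card] at h
    omega
  have hupper : Module.finrank ℝ (vectorSpan ℝ S) ≤ Fintype.card V - 2 := by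
    rw [← hker]
    exact Submodule.finrank_mono hspan_le
  -- lower bound: edges avoiding vout give directions
  have hedge : ∀ a b : V, G.Adj a b → a ∈ {x | x ≠ vout} → b ∈ {x | x ≠ vout} →
      Pi.single a (1:ℝ) + Pi.single b 1 ∈ vectorSpan ℝ S := by
    intro a b hab ha hb
    have ha' : a ≠ vout := ha
    have hb' : b ≠ vout := hb
    obtain ⟨q'⟩ := hconn.preconnected ⟨vin, hne⟩ ⟨a, ha⟩
    let ι : G.induce {x | x ≠ vout} →g G := ⟨Subtype.val, fun h => h⟩
    let q : G.Walk vin a := q'.map ι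
    have hq_avoid : vout ∉ q.support := by
      intro hx
      rw [SimpleGraph.Walk.support_map, List.mem_map] at hx
      obtain ⟨y, _, hy⟩ := hx
      exact y.2 hy
    have hq0 : trace q vout = 0 := by
      simp [trace, List.count_eq_zero_of_not_mem hq_avoid]
    let loop : G.Walk a a :=
      SimpleGraph.Walk.cons hab (SimpleGraph.Walk.cons hab.symm SimpleGraph.Walk.nil)
    have hloop : trace loop = Pi.single a 1 + Pi.single a 1 + Pi.single b 1 := by
      funext x
      have hab' : a ≠ b := hab.ne
      simp only [trace, loop, SimpleGraph.Walk.support_cons, SimpleGraph.Walk.support_nil,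
        List.count_cons, List.count_nil, Pi.add_apply, Pi.single_apply]
      by_cases hxa : x = a <;> by_cases hxb : x = b
      · exact absurd (hxa.symm.trans hxb) hab'
      · subst hxa
        norm_num [(Ne.symm hxb : b ≠ x), hxb]
      · subst hxb
        norm_num [(Ne.symm hxa : a ≠ x), hxa]
      · norm_num [(Ne.symm hxa : a ≠ x), (Ne.symm hxb : b ≠ x), hxa, hxb]
    let ω1 : G.Walk vin vout := q.append (loop.append (q.reverse.append p0.1))
    let ω2 : G.Walk vin vout := q.append (q.reverse.append p0.1)
    have e1 : trace ω1 = trace q + ((trace loop + ((trace q + trace p0.1)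
        - Pi.single vin 1)) - Pi.single a 1) - Pi.single a 1 := by
      show trace (q.append (loop.append (q.reverse.append p0.1))) = _
      rw [trace_append, trace_append, trace_append, trace_reverse]
    have e2 : trace ω2 = trace q + ((trace q + trace p0.1)
        - Pi.single vin 1) - Pi.single a 1 := by
      show trace (q.append (q.reverse.append p0.1)) = _
      rw [trace_append, trace_append, trace_reverse]
    have hsa : (Pi.single a (1:ℝ) : V → ℝ) vout = 0 := by simp [Pi.single_apply, Ne.symm ha']
    have hsb : (Pi.single b (1:ℝ) : V → ℝ) vout = 0 := by simp [Pi.single_apply, Ne.symm hb']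
    have hsv : (Pi.single vin (1:ℝ) : V → ℝ) vout = 0 := by simp [Pi.single_apply, hne.symm]
    have hproper : ∀ ω : G.Walk vin vout, trace ω vout = 1 → IsProper ω := by
      intro ω h
      rw [trace] at h
      exact_mod_cast h
    have hω1 : IsProper ω1 := by
      apply hproper
      rw [e1]
      simp only [Pi.add_apply, Pi.sub_apply, hq0, hp0v, hsa, hsv, hloop, hsb]
      ring
    have hω2 : IsProper ω2 := by
      apply hproper
      rw [e2]
      simp only [Pi.add_apply, Pi.sub_apply, hq0, hp0v, hsa, hsv]
      ring
    have key : Pi.single a (1:ℝ) + Pi.single b 1 = trace ω1 - trace ω2 := by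
      rw [e1, e2, hloop]; abel
    rw [key, ← vsub_eq_sub]
    exact vsub_mem_vectorSpan ℝ ⟨ω1, hω1, rfl⟩ ⟨ω2, hω2, rfl⟩
  -- the linearly independent family
  set s : Finset V := (Finset.univ.erase vout).erase vin with hsdef
  have hs_card : s.card = Fintype.card V - 2 := by
    rw [hsdef, Finset.card_erase_of_mem (Finset.mem_erase.mpr ⟨hne, Finset.mem_univ _⟩),
      Finset.card_erase_of_mem (Finset.mem_univ _), Finset.card_univ]
    omega
  have hs_ne : ∀ w : V, w ∈ s → w ≠ vin ∧ w ≠ vout := by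
    intro w hw
    rw [hsdef, Finset.mem_erase, Finset.mem_erase] at hw
    exact ⟨hw.1, hw.2.1⟩
  let F : {w // w ∈ s} → (V → ℝ) := fun w =>
    Pi.single vin 1 - (σ vin * σ (w : V)) • (Pi.single (w : V) 1 : V → ℝ)
  have hFmem : ∀ w, F w ∈ vectorSpan ℝ S := by
    intro w
    obtain ⟨p⟩ := hconn.preconnected ⟨vin, hne⟩ ⟨(w : V), (hs_ne w w.2).2⟩
    exact mem_of_walk (vectorSpan ℝ S) σ hσ2 hedge hflip p
  have hFli : LinearIndependent ℝ F := by
    rw [Fintype.linearIndependent_iff]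
    intro g hg w0
    have h := congrFun hg (w0 : V)
    rw [Finset.sum_apply] at h
    have hw0vin : (w0 : V) ≠ vin := (hs_ne _ w0.2).1
    have hcalc : ∀ w : {w // w ∈ s}, (g w • F w) (w0 : V)
        = if w = w0 then -(g w * (σ vin * σ (w : V))) else 0 := by
      intro w
      simp only [F, Pi.smul_apply, Pi.sub_apply, Pi.single_apply, smul_eq_mul]
      rw [if_neg hw0vin]
      by_cases hww : w = w0
      · subst hww; simp
      · have hne2 : (w0 : V) ≠ (w : V) := fun hh => hww (Subtype.ext hh.symm)
        rw [if_neg hne2]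
        simp [hww]
    rw [Finset.sum_congr rfl fun w _ => hcalc w] at h
    rw [Finset.sum_ite_eq' Finset.univ w0 (fun w => -(g w * (σ vin * σ (w : V)))),
      if_pos (Finset.mem_univ w0)] at h
    have h4 : g w0 * (σ vin * σ (w0 : V)) = 0 := neg_eq_zero.mp h
    rcases mul_eq_zero.mp h4 with h | h
    · exact h
    · rcases mul_eq_zero.mp h with h | h
      · exact absurd h (hσne vin)
      · exact absurd h (hσne _)
  have hlower : Fintype.card V - 2 ≤ Module.finrank ℝ (vectorSpan ℝ S) := by
    let F' : {w // w ∈ s} → (vectorSpan ℝ S) := fun w => ⟨F w, hFmem w⟩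
    have hli' : LinearIndependent ℝ F' := by
      apply LinearIndependent.of_comp (vectorSpan ℝ S).subtype
      exact hFli
    have := hli'.fintype_card_le_finrank
    rwa [Fintype.card_coe, hs_card] at this
  rw [direction_affineSpan]
  exact le_antisymm hupper hlower


end
end

section
/- Let G be a finite connected simple graph with distinguished vertices v_in ≠ v_out such that G − v_out is connected, and let S ⊆ ℝ^V be the real linear span of { tr_{ω₁} − tr_{ω₂} : ω₁, ω₂ proper walks from v_in to v_out }. If there exists a walk of length ℓ from v_in to a vertex v entirely inside G − v_out, then the vector χ_{v_in} − (−1)^ℓ χ_v belongs to S. -/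
open scoped Classical

noncomputable section

lemma count_aux {α : Type*} [DecidableEq α] (x v w : α) (L t : List α) :
    ((L ++ w :: v :: t).count x : ℝ) - ((L ++ t).count x : ℝ)
      = (if x = v then 1 else 0) + (if x = w then 1 else 0) := by
  have : (L ++ w :: v :: t).count x = (L ++ t).count x
      + ((if w = x then 1 else 0) : ℕ) + ((if v = x then 1 else 0) : ℕ) := by
    simp [List.count_append, List.count_cons]; ring
  rw [this]
  push_cast
  simp only [show (w = x) ↔ (x = w) from eq_comm, show (v = x) ↔ (x = v) from eq_comm]
  ring

lemma key {V : Type*} [DecidableEq V] (G : SimpleGraph V) (hG : G.Connected)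
    (vin vout : V) (hne : vin ≠ vout)
    (hconn : (G.induce {x | x ≠ vout}).Connected)
    {v w : V} (hadj : G.Adj v w) (hv : v ≠ vout) (hw : w ≠ vout) :
    ((Pi.single v 1 : V → ℝ) + Pi.single w 1) ∈
      Submodule.span ℝ {d : V → ℝ | ∃ ω₁ ω₂ : G.Walk vin vout,
        IsProper ω₁ ∧ IsProper ω₂ ∧ d = trace ω₁ - trace ω₂} := by
  let f : G.induce {x | x ≠ vout} →g G := ⟨Subtype.val, fun {a b} h => h⟩
  obtain ⟨p0⟩ := hconn ⟨vin, hne⟩ ⟨v, hv⟩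
  set p' : G.Walk vin v := p0.map f with hp'
  have hpv : vout ∉ p'.support := by
    rw [hp', SimpleGraph.Walk.support_map]
    rintro h
    obtain ⟨a, _, ha⟩ := List.mem_map.mp h
    exact a.2 ha
  obtain ⟨q0⟩ := hG v vout
  set q : G.Walk v vout := q0.toPath.1 with hq
  have hqn : q.support.Nodup := q0.toPath.2.support_nodup
  have hqc : q.support.count vout = 1 :=
    List.count_eq_one_of_mem hqn (SimpleGraph.Walk.end_mem_support q)
  set ω₁ : G.Walk vin vout :=
    p'.append (SimpleGraph.Walk.cons hadj (SimpleGraph.Walk.cons hadj.symm q)) with hω₁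
  set ω₂ : G.Walk vin vout := p'.append q with hω₂
  have hs1 : ω₁.support = p'.support ++ (w :: q.support) := by
    rw [hω₁, SimpleGraph.Walk.support_append]; simp
  have hs2 : ω₂.support = p'.support ++ q.support.tail := by
    rw [hω₂, SimpleGraph.Walk.support_append]
  have hqsupp : q.support = v :: q.support.tail := by
    conv_lhs => rw [q.support_eq_cons]
  have hcp : p'.support.count vout = 0 := List.count_eq_zero_of_not_mem hpv
  have h1 : IsProper ω₁ := by
    unfold IsProper
    rw [hs1, List.count_append, hcp, hqsupp]
    simp [List.count_cons, hv.symm, hw.symm, hqc]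
    rw [hqsupp] at hqc
    exact hw
  have h2 : IsProper ω₂ := by
    unfold IsProper
    rw [hs2, List.count_append, hcp]
    rw [hqsupp, List.count_cons] at hqc
    simpa [hv.symm, hv] using hqc
  have hdiff : ((Pi.single v 1 : V → ℝ) + Pi.single w 1) = trace ω₁ - trace ω₂ := by
    funext x
    simp only [trace, Pi.add_apply, Pi.sub_apply, Pi.single_apply]
    rw [hs1, hs2, hqsupp]
    simp only [List.tail_cons]
    exact (count_aux x v w p'.support q.support.tail).symm
  exact hdiff ▸ Submodule.subset_span ⟨ω₁, ω₂, h1, h2, rfl⟩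

/-- If there is a walk of length `ℓ` from `vin` to `v` inside `G - vout`, then
`χ_{vin} - (-1)^ℓ χ_v` lies in the span of the differences of traces of proper walks. -/
theorem indicator_diff_mem_span {V : Type*} [Fintype V] [DecidableEq V]
    (G : SimpleGraph V) (hG : G.Connected) (vin vout : V) (hne : vin ≠ vout)
    (hconn : (G.induce {x | x ≠ vout}).Connected)
    (v : V) (ℓ : ℕ) (p : G.Walk vin v) (hp : vout ∉ p.support) (hlen : p.length = ℓ) :
    ((Pi.single vin 1 : V → ℝ) - ((-1 : ℝ)) ^ ℓ • (Pi.single v 1 : V → ℝ)) ∈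
      Submodule.span ℝ {d : V → ℝ | ∃ ω₁ ω₂ : G.Walk vin vout,
        IsProper ω₁ ∧ IsProper ω₂ ∧ d = trace ω₁ - trace ω₂} := by
  subst hlen
  induction p using SimpleGraph.Walk.concatRec with
  | Hnil =>
    simp
  | @Hconcat s u w q h ih =>
    rw [SimpleGraph.Walk.support_concat] at hp
    have hpq : vout ∉ q.support := fun hm => hp (List.mem_append_left _ hm)
    have hwne : w ≠ vout := by
      intro hwv
      exact hp (by simp [hwv])
    have hune : u ≠ vout := by
      intro huv
      exact hpq (huv ▸ SimpleGraph.Walk.end_mem_support q)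
    have h1 := ih hne hpq
    have h2 := key G hG s vout hne hconn h hune hwne
    have hrw : ((Pi.single s 1 : V → ℝ) - (-1 : ℝ) ^ (q.concat h).length • (Pi.single w 1 : V → ℝ))
        = ((Pi.single s 1 : V → ℝ) - (-1 : ℝ) ^ q.length • (Pi.single u 1 : V → ℝ))
          + (-1 : ℝ) ^ q.length • ((Pi.single u 1 : V → ℝ) + (Pi.single w 1 : V → ℝ)) := by
      rw [SimpleGraph.Walk.length_concat, pow_succ]
      module
    rw [hrw]
    exact Submodule.add_mem _ h1 (Submodule.smul_mem _ _ h2)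


end
end

section
/- Let G be a finite connected simple graph on vertex set V with distinguished vertices v_in ≠ v_out such that G − v_out is connected, and let β : V → ℝ_{>0} be a positive weight function. Then there is at most one nonnegative vector r ∈ ℝ^V with r(v_out) = 1 and ‖r‖₁ > 1 satisfying M_β r = r. -/
open scoped Classical

noncomputable section

/-- Every vertex of a connected graph on a nontrivial vertex type has a neighbor. -/
private lemma exists_adj_of_connected' {V : Type*} {G : SimpleGraph V}
    (hG : G.Connected) (hnt : Nontrivial V) (v : V) : ∃ u, G.Adj u v := by
  obtain ⟨w, hw⟩ := exists_ne v
  obtain ⟨p⟩ := hG.preconnected v w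
  cases p with
  | nil => exact absurd rfl hw
  | cons h _ => exact ⟨_, h.symm⟩

/-- Maximum principle for a substochastic harmonic function on `V \ {vout}`. -/
private lemma subharmonic_nonpos {V : Type*} [Fintype V] [DecidableEq V]
    (G : SimpleGraph V) (vout : V)
    (hconn : (G.induce {x | x ≠ vout}).Connected)
    (β : V → ℝ) (hβ : ∀ v, 0 < β v)
    (hadj : ∃ u, G.Adj u vout)
    (z : V → ℝ)
    (hz : ∀ v, v ≠ vout →
      (∑ u ∈ Finset.univ.filter (fun u => G.Adj u v), β u) * z v
        = ∑ w ∈ Finset.univ.filter (fun w => G.Adj v w ∧ w ≠ vout), β w * z w)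
    (v : V) (hv : v ≠ vout) : z v ≤ 0 := by
  set T : Finset V := Finset.univ.filter (fun x => x ≠ vout) with hT
  have hvT : v ∈ T := by simp [hT, hv]
  have hTne : T.Nonempty := ⟨v, hvT⟩
  set m : ℝ := T.sup' hTne z with hm
  have hub : ∀ x, x ≠ vout → z x ≤ m := by
    intro x hx
    exact Finset.le_sup' z (by simp [hT, hx])
  by_contra hcon
  push_neg at hcon
  have hm0 : 0 < m := lt_of_lt_of_le hcon (hub v hv)
  -- key local step
  have key : ∀ x, x ≠ vout → z x = m →
      (¬ G.Adj x vout) ∧ ∀ w, G.Adj x w → z w = m := by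
    intro x hx hxm
    set Sx : ℝ := ∑ u ∈ Finset.univ.filter (fun u => G.Adj u x), β u with hSx
    set Fx : Finset V := Finset.univ.filter (fun w => G.Adj x w ∧ w ≠ vout) with hFx
    have heq : Sx * m = ∑ w ∈ Fx, β w * z w := by rw [← hxm]; exact hz x hx
    have hle1 : ∀ w ∈ Fx, β w * z w ≤ β w * m := by
      intro w hw
      rw [hFx, Finset.mem_filter] at hw
      exact mul_le_mul_of_nonneg_left (hub w hw.2.2) (hβ w).le
    have h1 : ∑ w ∈ Fx, β w * z w ≤ ∑ w ∈ Fx, β w * m := Finset.sum_le_sum hle1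
    have hsub : Fx ⊆ Finset.univ.filter (fun u => G.Adj u x) := by
      intro w hw
      rw [hFx, Finset.mem_filter] at hw
      simp [hw.2.1.symm]
    have h2 : ∑ w ∈ Fx, β w ≤ Sx :=
      Finset.sum_le_sum_of_subset_of_nonneg hsub (fun w _ _ => (hβ w).le)
    have h3 : (∑ w ∈ Fx, β w * m) = (∑ w ∈ Fx, β w) * m := by
      rw [Finset.sum_mul]
    have h4 : (∑ w ∈ Fx, β w) * m ≤ Sx * m :=
      mul_le_mul_of_nonneg_right h2 hm0.le
    have hall : Sx * m = ∑ w ∈ Fx, β w * m := le_antisymm (heq ▸ h1) (by linarith)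
    have hsumeq : (∑ w ∈ Fx, β w) = Sx := by
      have : (∑ w ∈ Fx, β w) * m = Sx * m := by linarith [heq, hall, h3]
      exact mul_right_cancel₀ hm0.ne' this
    have hnadj : ¬ G.Adj x vout := by
      intro hxo
      have hvoutmem : vout ∈ Finset.univ.filter (fun u => G.Adj u x) := by
        simp [hxo.symm]
      have hvoutnot : vout ∉ Fx := by simp [hFx]
      have : ∑ w ∈ Fx, β w < Sx := by
        refine Finset.sum_lt_sum_of_subset hsub hvoutmem hvoutnot (hβ vout) ?_
        exact fun w _ _ => (hβ w).le
      linarith [hsumeq]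
    refine ⟨hnadj, ?_⟩
    have heach : ∀ w ∈ Fx, β w * z w = β w * m := by
      have := (Finset.sum_eq_sum_iff_of_le hle1).1 (by linarith [heq, hall])
      exact this
    intro w hxw
    have hwvout : w ≠ vout := by rintro rfl; exact hnadj hxw
    have hwFx : w ∈ Fx := by simp [hFx, hxw, hwvout]
    have := heach w hwFx
    exact mul_left_cancel₀ (hβ w).ne' this
  -- obtain a maximizer
  obtain ⟨v0, hv0T, hv0m⟩ := Finset.exists_mem_eq_sup' hTne z
  have hv0 : v0 ≠ vout := by simpa [hT] using hv0T
  have hv0z : z v0 = m := hv0m.symm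
  -- propagate along walks in the induced graph
  have prop : ∀ (a b : {x // x ∈ {x : V | x ≠ vout}}) (_ : (G.induce {x : V | x ≠ vout}).Walk a b),
      z a = m → z b = m := by
    intro a b p
    induction p with
    | nil => exact id
    | cons h p ih =>
      intro hza
      rename_i a' c' b'
      have hadj' : G.Adj ↑a' ↑c' := by simpa using h
      have hc : z ↑c' = m := (key ↑a' a'.2 hza).2 _ hadj'
      exact ih hc
  -- every vertex ≠ vout has z = m; in particular a neighbor of vout, contradiction
  obtain ⟨u0, hu0⟩ := hadj
  have hu0ne : u0 ≠ vout := G.ne_of_adj hu0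
  have hu0m : z u0 = m := by
    have := prop ⟨v0, hv0⟩ ⟨u0, hu0ne⟩
      (hconn.preconnected ⟨v0, hv0⟩ ⟨u0, hu0ne⟩).some hv0z
    exact this
  exact (key u0 hu0ne hu0m).1 hu0

/-- Evaluation of the matrix-vector product for rows `v ≠ vout`. -/
private lemma mulVec_eval {V : Type*} [Fintype V] [DecidableEq V]
    (G : SimpleGraph V) (vin vout : V) (β : V → ℝ) (r : V → ℝ)
    (v : V) (hv : v ≠ vout) :
    (Mmat G vin vout β).mulVec r v
      = (if v = vin then r vout else 0)
        + ∑ w ∈ Finset.univ.filter (fun w => G.Adj v w ∧ w ≠ vout),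
            (β v / ∑ u ∈ Finset.univ.filter (fun u => G.Adj u w), β u) * r w := by
  classical
  unfold Matrix.mulVec dotProduct Mmat
  rw [← Finset.add_sum_erase _ _ (Finset.mem_univ vout)]
  congr 1
  · simp only [hv, false_and, and_true, ne_eq, not_true_eq_false, and_false, if_false, or_false,
      false_or]
    by_cases hvin : v = vin <;> simp [hvin]
  · rw [← Finset.filter_ne' Finset.univ vout, Finset.sum_filter, Finset.sum_filter]
    refine Finset.sum_congr rfl (fun w _ => ?_)
    by_cases hw : w = vout
    · simp [hw]
    · by_cases ha : G.Adj v w <;> simp [hw, ha, hv]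

/-- Uniqueness: there is at most one nonnegative vector `r` with `r(vout) = 1`,
`‖r‖₁ > 1` and `M_β r = r`. -/
theorem fixed_point_unique {V : Type*} [Fintype V] [DecidableEq V]
    (G : SimpleGraph V) (hG : G.Connected) (vin vout : V) (hne : vin ≠ vout)
    (hconn : (G.induce {x | x ≠ vout}).Connected)
    (β : V → ℝ) (hβ : ∀ v, 0 < β v)
    (r r' : V → ℝ) (hr : ∀ v, 0 ≤ r v) (hr' : ∀ v, 0 ≤ r' v)
    (hr1 : r vout = 1) (hr1' : r' vout = 1)
    (hnorm : 1 < ∑ v, |r v|) (hnorm' : 1 < ∑ v, |r' v|)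
    (hfix : (Mmat G vin vout β).mulVec r = r)
    (hfix' : (Mmat G vin vout β).mulVec r' = r') :
    r = r' := by
  have hnt : Nontrivial V := ⟨⟨vin, vout, hne⟩⟩
  set S : V → ℝ := fun w => ∑ u ∈ Finset.univ.filter (fun u => G.Adj u w), β u with hSdef
  have hSpos : ∀ w, 0 < S w := by
    intro w
    obtain ⟨u, hu⟩ := exists_adj_of_connected' hG hnt w
    exact Finset.sum_pos' (fun x _ => (hβ x).le) ⟨u, by simp [hu], hβ u⟩
  set d : V → ℝ := fun v => r v - r' v with hd
  have hdout : d vout = 0 := by simp [hd, hr1, hr1']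
  have hdeq : ∀ v, v ≠ vout → d v
      = ∑ w ∈ Finset.univ.filter (fun w => G.Adj v w ∧ w ≠ vout), (β v / S w) * d w := by
    intro v hv
    have h1 := congrFun hfix v
    have h2 := congrFun hfix' v
    rw [mulVec_eval G vin vout β r v hv] at h1
    rw [mulVec_eval G vin vout β r' v hv] at h2
    have hstep : d v
        = (∑ w ∈ Finset.univ.filter (fun w => G.Adj v w ∧ w ≠ vout), (β v / S w) * r w)
          - ∑ w ∈ Finset.univ.filter (fun w => G.Adj v w ∧ w ≠ vout), (β v / S w) * r' w := by
      simp only [hd]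
      rw [← h1, ← h2, hr1, hr1']
      ring
    rw [hstep, ← Finset.sum_sub_distrib]
    exact Finset.sum_congr rfl (fun w _ => by simp only [hd]; ring)
  set z : V → ℝ := fun v => d v / (β v * S v) with hzdef
  have hdz : ∀ w, d w = β w * S w * z w := by
    intro w
    have hne' : β w * S w ≠ 0 := (mul_pos (hβ w) (hSpos w)).ne'
    simp only [hzdef]
    field_simp
    rw [mul_assoc, mul_div_cancel_right₀ _ hne']
  have hz : ∀ v, v ≠ vout →
      S v * z v = ∑ w ∈ Finset.univ.filter (fun w => G.Adj v w ∧ w ≠ vout), β w * z w := by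
    intro v hv
    have h := hdeq v hv
    rw [hdz v] at h
    have hrhs : ∀ w ∈ Finset.univ.filter (fun w => G.Adj v w ∧ w ≠ vout),
        (β v / S w) * d w = β v * (β w * z w) := by
      intro w _
      rw [hdz w]
      have h1 : S w ≠ 0 := (hSpos w).ne'
      field_simp
    rw [Finset.sum_congr rfl hrhs, ← Finset.mul_sum] at h
    have hβv : β v ≠ 0 := (hβ v).ne'
    have : β v * (S v * z v) = β v * ∑ w ∈ Finset.univ.filter
        (fun w => G.Adj v w ∧ w ≠ vout), β w * z w := by linarith [h]
    exact mul_left_cancel₀ hβv this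
  have hadj : ∃ u, G.Adj u vout := exists_adj_of_connected' hG hnt vout
  have hzzero : ∀ v, v ≠ vout → z v = 0 := by
    intro v hv
    have h1 : z v ≤ 0 := subharmonic_nonpos G vout hconn β hβ hadj z hz v hv
    have h2 : (-z) v ≤ 0 := by
      refine subharmonic_nonpos G vout hconn β hβ hadj (-z) ?_ v hv
      intro u hu
      have := hz u hu
      simp only [Pi.neg_apply]
      rw [mul_neg, this, ← Finset.sum_neg_distrib]
      exact Finset.sum_congr rfl (fun w _ => by ring)
    simp only [Pi.neg_apply] at h2
    linarith
  funext v
  by_cases hv : v = vout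
  · rw [hv, hr1, hr1']
  · have : d v = 0 := by rw [hdz v, hzzero v hv, mul_zero]
    have := this
    simp only [hd] at this
    linarith

end
end

section
/- Let G be a finite connected simple graph with distinguished vertices v_in ≠ v_out such that G − v_out is connected, let v ∈ V with v ≠ v_out, and let G′ be the graph obtained from G by attaching a new vertex v′ of degree 1 adjacent only to v. Let α ∈ ℝ, let r : V → ℝ, and define r′ : V(G′) → ℝ by r′(w) = r(w) for w ∈ V and r′(v′) = α. If r′ ∈ Ψ(G′), then r − α·e_v ∈ Ψ(G). -/
open scoped Classical

noncomputable section

/-- The graph obtained from `G` by attaching a new pendant vertex (represented by `none`)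
of degree 1, adjacent only to `v`. -/
def attachPendant {V : Type*} (G : SimpleGraph V) (v : V) : SimpleGraph (Option V) :=
  SimpleGraph.fromRel (fun a b =>
    (∃ x y, a = some x ∧ b = some y ∧ G.Adj x y) ∨ (a = none ∧ b = some v))

theorem image_intrinsicInterior_subset'
    {E F : Type*} [NormedAddCommGroup E] [NormedSpace ℝ E] [FiniteDimensional ℝ E]
    [NormedAddCommGroup F] [NormedSpace ℝ F] [FiniteDimensional ℝ F]
    (L : E →ₗ[ℝ] F) (s : Set E) :
    L '' intrinsicInterior ℝ s ⊆ intrinsicInterior ℝ (L '' s) := by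
  rcases s.eq_empty_or_nonempty with rfl | hs
  · simp [intrinsicInterior_empty]
  haveI : Nonempty s := hs.to_subtype
  haveI : Nonempty (L '' s : Set F) := (hs.image L).to_subtype
  set f : E →ᵃ[ℝ] F := L.toAffineMap with hf
  have himg : f '' s = L '' s := rfl
  have hmap : (affineSpan ℝ s).map f = affineSpan ℝ (L '' s) := by
    rw [AffineSubspace.map_span, himg]
  set φ : (affineSpan ℝ s) →ᵃ[ℝ] (affineSpan ℝ (L '' s)) := f.restrict hmap.le with hφ
  have hsurj : Function.Surjective φ := AffineMap.restrict.surjective f hmap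
  have hopen : IsOpenMap φ :=
    AffineMap.isOpenMap_linear_iff.mp
      (LinearMap.isOpenMap_of_finiteDimensional _ (φ.linear_surjective_iff.mpr hsurj))
  rintro _ ⟨x, hx, rfl⟩
  rw [mem_intrinsicInterior] at hx ⊢
  obtain ⟨y, hy, rfl⟩ := hx
  refine ⟨φ y, ?_, rfl⟩
  have hsub : φ '' ((↑) ⁻¹' s) ⊆ (↑) ⁻¹' (L '' s) := by
    rintro _ ⟨z, hz, rfl⟩
    exact ⟨z, hz, rfl⟩
  exact interior_mono hsub (hopen.image_interior_subset _ ⟨y, hy, rfl⟩)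

lemma attachPendant_adj_some {V : Type*} {G : SimpleGraph V} {v a b : V} :
    (attachPendant G v).Adj (some a) (some b) ↔ G.Adj a b := by
  simp only [attachPendant, SimpleGraph.fromRel_adj, ne_eq, Option.some.injEq]
  constructor
  · rintro ⟨hne, (⟨x, y, hx, hy, h⟩ | ⟨h, -⟩) | (⟨x, y, hx, hy, h⟩ | ⟨h, -⟩)⟩
    · cases hx; cases hy; exact h
    · exact absurd h (by simp)
    · cases hx; cases hy; exact h.symm
    · exact absurd h (by simp)
  · intro h
    exact ⟨h.ne, Or.inl (Or.inl ⟨a, b, rfl, rfl, h⟩)⟩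

lemma attachPendant_adj_some_none {V : Type*} {G : SimpleGraph V} {v a : V}
    (h : (attachPendant G v).Adj (some a) none) : a = v := by
  simp only [attachPendant, SimpleGraph.fromRel_adj] at h
  obtain ⟨-, (⟨x, y, -, hy, -⟩ | ⟨h1, -⟩) | (⟨x, y, hx, -, -⟩ | ⟨-, h2⟩)⟩ := h
  · exact absurd hy (by simp)
  · exact absurd h1 (by simp)
  · exact absurd hx (by simp)
  · exact Option.some_injective _ h2.symm ▸ rfl

lemma attachPendant_adj_none_some {V : Type*} {G : SimpleGraph V} {v a : V}
    (h : (attachPendant G v).Adj none (some a)) : a = v :=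
  attachPendant_adj_some_none h.symm

lemma strip_aux {V : Type*} [DecidableEq V] {G : SimpleGraph V} {v : V} (n : ℕ) :
    ∀ {a b : V} (p : (attachPendant G v).Walk (some a) (some b)), p.length = n →
      ∃ ω : G.Walk a b, ∀ x : V,
        ω.support.count x
            + (if x = v then @List.count (Option V) instBEqOfDecidableEq none p.support else 0)
          = @List.count (Option V) instBEqOfDecidableEq (some x) p.support := by
  induction n using Nat.strong_induction_on with
  | _ n ih =>
    intro a b p hp
    cases p with
    | nil =>
      refine ⟨SimpleGraph.Walk.nil, fun x => ?_⟩
      simp only [SimpleGraph.Walk.support_nil, List.count_singleton, List.count_cons,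
        List.count_nil, Option.some.injEq]
      by_cases hx : x = v <;> by_cases hax : a = x <;> simp [hx, hax]
    | @cons _ u _ h q =>
      match u with
      | some c =>
        have hlt : q.length < n := by
          subst hp; simp [SimpleGraph.Walk.length_cons]
        obtain ⟨ω, hω⟩ := ih q.length hlt q rfl
        refine ⟨SimpleGraph.Walk.cons (attachPendant_adj_some.mp h) ω, fun x => ?_⟩
        have := hω x
        simp only [SimpleGraph.Walk.support_cons, List.count_cons] at this ⊢
        by_cases hx : x = v <;> by_cases hax : a = x <;>
          simp [hx, hax] at this ⊢ <;> omega
      | none =>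
        cases q with
        | @cons _ u _ h' q' =>
          match u with
          | some c =>
            have ha : a = v := attachPendant_adj_some_none h
            have hc : c = v := attachPendant_adj_none_some h'
            have hac : c = a := hc.trans ha.symm
            subst hac
            have hlt : q'.length < n := by
              subst hp; simp [SimpleGraph.Walk.length_cons]
            obtain ⟨ω, hω⟩ := ih q'.length hlt q' rfl
            refine ⟨ω, fun x => ?_⟩
            have := hω x
            simp only [SimpleGraph.Walk.support_cons, List.count_cons] at this ⊢
            by_cases hx : x = v
            · have hax : c = x := by rw [hc, hx]
              simp [hx, hax] at this ⊢; omega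
            · have hax : c ≠ x := fun hh => hx (hh ▸ hc)
              simp [hx, hax] at this ⊢; omega
          | none => exact absurd h' (by simp)


def someHom {V : Type*} (G : SimpleGraph V) (v : V) : G →g attachPendant G v where
  toFun := some
  map_rel' := fun h => attachPendant_adj_some.mpr h

lemma count_map_some {V : Type*} [DecidableEq V] (l : List V) (x : V) :
    @List.count (Option V) instBEqOfDecidableEq (some x) (l.map some) = l.count x := by
  induction l with
  | nil => simp
  | cons a l ih => by_cases h : a = x <;> simp [List.count_cons, ih, h]

lemma count_map_some_none {V : Type*} [DecidableEq V] (l : List V) :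
    @List.count (Option V) instBEqOfDecidableEq none (l.map some) = 0 := by
  induction l with
  | nil => simp
  | cons a l ih => simp [List.count_cons, ih]

def pendantProj (V : Type*) [DecidableEq V] (v : V) : ((Option V) → ℝ) →ₗ[ℝ] (V → ℝ) where
  toFun f := fun w => f (some w) - (if w = v then f none else 0)
  map_add' f g := by
    funext w; by_cases h : w = v <;> simp [h] <;> ring
  map_smul' c f := by
    funext w; by_cases h : w = v <;> simp [h] <;> ring

lemma traceSet_eq_image {V : Type*} [DecidableEq V] (G : SimpleGraph V) (vin vout v : V)
    (hv : v ≠ vout) :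
    traceSet G vin vout
      = (pendantProj V v) '' traceSet (attachPendant G v) (some vin) (some vout) := by
  have hcoe : ⇑(someHom G v) = some := rfl
  ext f
  constructor
  · rintro ⟨ω, hω, rfl⟩
    refine ⟨trace (ω.map (someHom G v)), ⟨ω.map (someHom G v), ?_, rfl⟩, ?_⟩
    · unfold IsProper at hω ⊢
      show @List.count (Option V) instBEqOfDecidableEq (some vout) (ω.map (someHom G v)).support = 1
      rw [SimpleGraph.Walk.support_map, hcoe, count_map_some]
      exact hω
    · funext w
      show trace (ω.map (someHom G v)) (some w)
          - (if w = v then trace (ω.map (someHom G v)) none else 0) = trace ω w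
      unfold trace
      rw [SimpleGraph.Walk.support_map, hcoe, count_map_some, count_map_some_none]
      by_cases h : w = v <;> simp [h]
  · rintro ⟨g, ⟨ω, hω, rfl⟩, rfl⟩
    obtain ⟨ω', hω'⟩ := strip_aux ω.length ω rfl
    refine ⟨ω', ?_, ?_⟩
    · have h2 := hω' vout
      rw [if_neg (fun hh : vout = v => hv hh.symm)] at h2
      unfold IsProper at hω ⊢
      omega
    · funext w
      have hnat := hω' w
      show trace ω (some w) - (if w = v then trace ω none else 0) = trace ω' w
      unfold trace
      rw [← hnat]
      by_cases hw : w = v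
      · rw [if_pos hw, if_pos hw]
        push_cast; ring
      · rw [if_neg hw, if_neg hw]
        push_cast; ring

/-- If `r'` (extending `r` by `r'(v') = α`) lies in `Ψ(G')`, where `G'` is obtained from `G`
by attaching a pendant vertex `v'` to `v`, then `r - α·e_v` lies in `Ψ(G)`. -/
theorem mem_Psi_of_attachPendant {V : Type*} [Fintype V] [DecidableEq V]
    (G : SimpleGraph V) (hG : G.Connected) (vin vout : V) (hne : vin ≠ vout)
    (hconn : (G.induce {x | x ≠ vout}).Connected)
    (v : V) (hv : v ≠ vout) (α : ℝ) (r : V → ℝ)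
    (h : (fun o => o.elim α r) ∈ Psi (attachPendant G v) (some vin) (some vout)) :
    (r - α • (Pi.single v 1 : V → ℝ)) ∈ Psi G vin vout := by
  have key := image_intrinsicInterior_subset' (pendantProj V v)
      (convexHull ℝ (traceSet (attachPendant G v) (some vin) (some vout)))
  have himg : (pendantProj V v) ''
        (convexHull ℝ (traceSet (attachPendant G v) (some vin) (some vout)))
      = convexHull ℝ (traceSet G vin vout) := by
    rw [LinearMap.image_convexHull, ← traceSet_eq_image G vin vout v hv]
  have hx : pendantProj V v (fun o => o.elim α r) ∈ Psi G vin vout := by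
    rw [Psi, ← himg]
    exact key ⟨_, h, rfl⟩
  have heq : pendantProj V v (fun o => o.elim α r)
      = r - α • (Pi.single v 1 : V → ℝ) := by
    funext w
    show r w - (if w = v then α else 0) = r w - α * (Pi.single v 1 : V → ℝ) w
    rw [Pi.single_apply]
    by_cases hw : w = v <;> simp [hw]
  rwa [heq] at hx

end
end

section
/- Let G be a finite connected simple graph with distinguished vertices v_in ≠ v_out such that G − v_out is connected, and suppose G has two vertices v, w ∉ {v_in, v_out} with identical neighborhoods N(v) = N(w). Suppose that the equation τ_ρ = r′ is solvable on G′ := G − w for every r′ ∈ Ψ(G′). Then for every r ∈ Ψ(G), the equation τ_ρ = r is solvable on G. -/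
open scoped Classical

noncomputable section

attribute [-instance] Subtype.instBEq

/-! ### Auxiliary lemmas -/

lemma mem_relint_iff {E : Type*} [NormedAddCommGroup E] [NormedSpace ℝ E] {s : Set E} {x : E} :
    x ∈ intrinsicInterior ℝ s ↔
      x ∈ affineSpan ℝ s ∧ ∃ ε > 0, ∀ y ∈ affineSpan ℝ s, dist y x < ε → y ∈ s := by
  unfold intrinsicInterior
  constructor
  · rintro ⟨⟨x', hx'⟩, hmem, rfl⟩
    refine ⟨hx', ?_⟩
    rw [mem_interior_iff_mem_nhds, Metric.mem_nhds_iff] at hmem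
    obtain ⟨ε, hε, hball⟩ := hmem
    refine ⟨ε, hε, fun y hy hdy => ?_⟩
    have : (⟨y, hy⟩ : affineSpan ℝ s) ∈ Metric.ball (⟨x', hx'⟩ : affineSpan ℝ s) ε := by
      simpa [Metric.mem_ball, Subtype.dist_eq] using hdy
    exact hball this
  · rintro ⟨hx, ε, hε, h⟩
    refine ⟨⟨x, hx⟩, ?_, rfl⟩
    rw [mem_interior_iff_mem_nhds, Metric.mem_nhds_iff]
    refine ⟨ε, hε, fun y hy => ?_⟩
    exact h y.1 y.2 (by simpa [Metric.mem_ball, Subtype.dist_eq] using hy)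

def collapse {V : Type*} [DecidableEq V] (v w : V) (hvw : v ≠ w) : V → {x : V // x ≠ w} :=
  fun y => if h : y = w then ⟨v, hvw⟩ else ⟨y, h⟩

def collapseHom {V : Type*} [DecidableEq V] (G : SimpleGraph V) (v w : V) (hvw : v ≠ w)
    (hN : ∀ x, G.Adj v x ↔ G.Adj w x) : G →g G.induce {x | x ≠ w} where
  toFun := collapse v w hvw
  map_rel' := by
    intro a b hab
    show G.Adj (collapse v w hvw a).1 (collapse v w hvw b).1
    unfold collapse
    split_ifs with h1 h2 h2
    · subst h1; subst h2; exact absurd hab (G.loopless.irrefl _)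
    · subst h1; exact (hN b).2 hab
    · subst h2; exact ((hN a).2 hab.symm).symm
    · exact hab

def inclHom {V : Type*} (G : SimpleGraph V) (s : Set V) : G.induce s →g G where
  toFun := Subtype.val
  map_rel' := fun h => h

def Lfun {V : Type*} [DecidableEq V] (v w : V) : (V → ℝ) → ({x : V // x ≠ w} → ℝ) :=
  fun f x => if x.1 = v then f v + f w else f x.1

section Helpers
variable {V : Type*} [DecidableEq V]

lemma count_map_collapse' {v w : V} (hvw : v ≠ w)
    (l : List V) (x : {x : V // x ≠ w}) :
    (l.map (collapse v w hvw)).count x =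
      if x.1 = v then l.count v + l.count w else l.count x.1 := by
  induction l with
  | nil => simp
  | cons a l ih =>
    rcases x with ⟨x, hxw⟩
    simp only [List.map_cons, List.count_cons, ih, collapse]
    split_ifs <;> try subst_vars
    all_goals (try simp_all [Subtype.ext_iff])
    all_goals (try omega)
    all_goals (exfalso; apply hxw; symm; assumption)

lemma count_map_val {p : V → Prop}
    (l : List {x : V // p x}) (x : V) :
    (l.map Subtype.val).count x = if h : p x then l.count ⟨x, h⟩ else 0 := by
  split_ifs with h
  · exact List.count_map_of_injective l Subtype.val Subtype.val_injective ⟨x, h⟩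
  · rw [List.count_eq_zero]
    intro hmem
    obtain ⟨⟨y, hy⟩, _, rfl⟩ := List.mem_map.1 hmem
    exact h hy

def sigmaFun (v w : V) (hvw : v ≠ w) (c : ℝ) :
    ({x : V // x ≠ w} → ℝ) → (V → ℝ) :=
  fun g x => if h : x = w then c else if x = v then g ⟨v, hvw⟩ - c else g ⟨x, h⟩

def evw (v w : V) : V → ℝ := fun x => if x = v then 1 else if x = w then -1 else 0

lemma Lfun_sigmaFun {v w : V} (hvw : v ≠ w) (c : ℝ) (g : {x : V // x ≠ w} → ℝ) :
    Lfun v w (sigmaFun v w hvw c g) = g := by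
  funext x
  rcases x with ⟨x, hx⟩
  simp only [Lfun, sigmaFun]
  split_ifs with h1 <;> simp_all [Subtype.ext_iff]

lemma sigmaFun_Lfun {v w : V} (hvw : v ≠ w) (r : V → ℝ) :
    sigmaFun v w hvw (r w) (Lfun v w r) = r := by
  funext x
  simp only [Lfun, sigmaFun]
  split_ifs with h1 h2 <;> simp_all

lemma sigmaFun_Lfun_eq {v w : V} (hvw : v ≠ w) (c : ℝ) (z : V → ℝ) :
    sigmaFun v w hvw c (Lfun v w z) = z + (z w - c) • evw v w := by
  funext x
  simp only [sigmaFun, Lfun, evw, Pi.add_apply, Pi.smul_apply, smul_eq_mul]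
  split_ifs <;> try subst_vars
  · exact absurd rfl hvw
  · ring
  · ring
  · ring

lemma sigmaFun_dist {v w : V} (hvw : v ≠ w) (c : ℝ) (g g' : {x : V // x ≠ w} → ℝ)
    [Fintype V] :
    dist (sigmaFun v w hvw c g) (sigmaFun v w hvw c g') ≤ dist g g' := by
  rw [dist_pi_le_iff dist_nonneg]
  intro x
  simp only [sigmaFun]
  split_ifs with h1 h2
  · simp [dist_nonneg]
  · rw [dist_sub_right]
    exact dist_le_pi_dist g g' _
  · exact dist_le_pi_dist g g' _

def Lmap (v w : V) : (V → ℝ) →ₗ[ℝ] ({x : V // x ≠ w} → ℝ) where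
  toFun := Lfun v w
  map_add' f g := by funext x; simp only [Lfun, Pi.add_apply]; split_ifs <;> ring
  map_smul' c f := by
    funext x
    simp only [Lfun, Pi.smul_apply, smul_eq_mul, RingHom.id_apply]
    split_ifs <;> ring

end Helpers

section Sums
variable {V : Type*} [Fintype V] [DecidableEq V]

lemma sum_pair_adjust (v w : V) (hvw : v ≠ w) (f g : V → ℝ)
    (hfg : ∀ x, x ≠ v → x ≠ w → f x = g x) (hsum : f v + f w = g v + g w) :
    ∑ x, f x = ∑ x, g x := by
  have key : ∀ h : V → ℝ, ∑ x, h x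
      = ∑ x ∈ (Finset.univ.erase v).erase w, h x + (h w + h v) := by
    intro h
    rw [← Finset.sum_erase_add Finset.univ h (Finset.mem_univ v),
      ← Finset.sum_erase_add (Finset.univ.erase v) h
        (Finset.mem_erase.2 ⟨Ne.symm (Ne.symm hvw).symm, Finset.mem_univ w⟩)]
    ring
  rw [key f, key g]
  have : ∑ x ∈ (Finset.univ.erase v).erase w, f x
      = ∑ x ∈ (Finset.univ.erase v).erase w, g x := by
    apply Finset.sum_congr rfl
    intro x hx
    rw [Finset.mem_erase, Finset.mem_erase] at hx
    exact hfg x hx.2.1 hx.1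
  rw [this]
  linarith

lemma sum_subtype_ne (w : V) (F : {x : V // x ≠ w} → ℝ) (Fe : V → ℝ)
    (hFe : ∀ y : {x : V // x ≠ w}, Fe y.1 = F y) (q : V → Prop) [DecidablePred q] :
    ∑ y' ∈ Finset.univ.filter (fun y' : {x : V // x ≠ w} => q y'.1), F y'
      = ∑ y ∈ Finset.univ.filter (fun y => q y ∧ y ≠ w), Fe y := by
  refine Finset.sum_bij' (fun a _ => a.1) (fun b hb => ⟨b, (Finset.mem_filter.1 hb).2.2⟩)
    ?_ ?_ ?_ ?_ ?_
  · intro a ha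
    simp only [Finset.mem_filter, Finset.mem_univ, true_and] at ha ⊢
    exact ⟨ha, a.2⟩
  · intro b hb
    simp only [Finset.mem_filter, Finset.mem_univ, true_and] at hb ⊢
    exact hb.1
  · intro a _; rfl
  · intro b _; rfl
  · intro a _; exact (hFe a).symm

end Sums

section TraceLemmas
variable {V : Type*} [DecidableEq V]

lemma trace_map_collapse (G : SimpleGraph V) (v w : V) (hvw : v ≠ w)
    (hN : ∀ x, G.Adj v x ↔ G.Adj w x) {a b : V} (ω : G.Walk a b) :
    trace (ω.map (collapseHom G v w hvw hN)) = Lfun v w (trace ω) := by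
  funext x
  simp only [trace, Lfun, SimpleGraph.Walk.support_map]
  rw [show ⇑(collapseHom G v w hvw hN) = collapse v w hvw from rfl]
  erw [count_map_collapse' hvw]
  split_ifs <;> push_cast <;> ring

lemma trace_map_incl (G : SimpleGraph V) (s : Set V) {a b : ↥s}
    (ω : (G.induce s).Walk a b) (x : V) :
    trace (ω.map (inclHom G s)) x = if h : x ∈ s then trace ω ⟨x, h⟩ else 0 := by
  simp only [trace, SimpleGraph.Walk.support_map]
  rw [show ⇑(inclHom G s) = Subtype.val from rfl, count_map_val]
  split_ifs <;> simp <;> convert rfl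

lemma count_vout_map_incl (G : SimpleGraph V) (vout : V) {a b : ↥{x : V | x ≠ vout}}
    (ω : (G.induce {x : V | x ≠ vout}).Walk a b) :
    (ω.map (inclHom G {x : V | x ≠ vout})).support.count vout = 0 := by
  rw [SimpleGraph.Walk.support_map,
    show ⇑(inclHom G {x : V | x ≠ vout}) = Subtype.val from rfl, count_map_val]
  rw [dif_neg]
  simp

end TraceLemmas

section Rows
variable {V : Type*} [Fintype V] [DecidableEq V]

lemma Mmat_mulVec_vout (G : SimpleGraph V) (vin vout : V) (β r : V → ℝ) :
    (Mmat G vin vout β).mulVec r vout = r vout := by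
  show ∑ y, Mmat G vin vout β vout y * r y = r vout
  have h : ∀ y, Mmat G vin vout β vout y * r y = if y = vout then r vout else 0 := by
    intro y
    unfold Mmat
    split_ifs with h1 h2 h3 <;> simp_all
  rw [Finset.sum_congr rfl fun y _ => h y]
  simp

lemma Mmat_mulVec_ne (G : SimpleGraph V) (vin vout : V) (β r : V → ℝ) (x : V)
    (hx : x ≠ vout) :
    (Mmat G vin vout β).mulVec r x = (if x = vin then r vout else 0)
      + β x * ∑ y ∈ Finset.univ.filter (fun y => G.Adj x y ∧ y ≠ vout),
          r y / (∑ u ∈ Finset.univ.filter (fun u => G.Adj u y), β u) := by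
  show ∑ y, Mmat G vin vout β x y * r y = _
  have h : ∀ y, Mmat G vin vout β x y * r y
      = (if y = vout then (if x = vin then r vout else 0) else 0)
        + (if G.Adj x y ∧ y ≠ vout then
            β x * (r y / ∑ u ∈ Finset.univ.filter (fun u => G.Adj u y), β u) else 0) := by
    intro y
    unfold Mmat
    split_ifs with h1 h2 h3 h4 h5 h6 h7 <;>
      first
        | (exfalso; tauto)
        | (rw [div_mul_eq_mul_div, mul_div_assoc, zero_add])
        | simp_all
  rw [Finset.sum_congr rfl fun y _ => h y, Finset.sum_add_distrib]
  congr 1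
  · simp
  · rw [Finset.mul_sum, Finset.sum_filter]

end Rows


/-- If `v, w ∉ {vin, vout}` have identical neighborhoods, and `τ_ρ = r'` is solvable on
`G' = G - w` for every `r' ∈ Ψ(G')`, then `τ_ρ = r` is solvable on `G` for every
`r ∈ Ψ(G)`. -/
theorem solvable_of_twin_vertices {V : Type*} [Fintype V] [DecidableEq V]
    (G : SimpleGraph V) (hG : G.Connected) (vin vout : V) (hne : vin ≠ vout)
    (hconn : (G.induce {x | x ≠ vout}).Connected)
    (v w : V) (hvw : v ≠ w)
    (hvin : v ≠ vin) (hvout : v ≠ vout) (hwin : w ≠ vin) (hwout : w ≠ vout)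
    (hN : ∀ x, G.Adj v x ↔ G.Adj w x)
    (hsolv' : ∀ r' ∈ Psi (G.induce {x | x ≠ w}) ⟨vin, hwin.symm⟩ ⟨vout, hwout.symm⟩,
      Solvable (G.induce {x | x ≠ w}) ⟨vin, hwin.symm⟩ ⟨vout, hwout.symm⟩ r')
    (r : V → ℝ) (hr : r ∈ Psi G vin vout) :
    Solvable G vin vout r := by
  classical
  set S := traceSet G vin vout with hS_def
  have hvw_nadj : ¬ G.Adj v w := fun h => G.loopless.irrefl w ((hN w).1 h)
  have hadjvw : ∀ x, G.Adj x v ↔ G.Adj x w :=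
    fun x => ⟨fun h => ((hN x).1 h.symm).symm, fun h => ((hN x).2 h.symm).symm⟩
  -- a neighbor z of vout
  obtain ⟨w0⟩ := hG.preconnected vout vin
  have hz : ∃ z, G.Adj z vout := by
    cases w0 with
    | nil => exact absurd rfl hne.symm
    | cons h p => exact ⟨_, h.symm⟩
  obtain ⟨z, hzadj⟩ := hz
  have hzout : z ≠ vout := hzadj.ne
  -- a neighbor u of v distinct from vout
  obtain ⟨p0⟩ := hconn.preconnected ⟨v, hvout⟩ ⟨vin, hne⟩
  have hu : ∃ u₀ : ↥{x : V | x ≠ vout}, G.Adj v u₀.1 := by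
    have hnn : ¬ p0.Nil :=
      SimpleGraph.Walk.not_nil_of_ne (fun hh => hvin (congrArg Subtype.val hh))
    obtain ⟨u₀, hadj, -, -⟩ := SimpleGraph.Walk.not_nil_iff.1 hnn
    exact ⟨u₀, hadj⟩
  obtain ⟨u₀, hadj_vu⟩ := hu
  have hadj_wu : G.Adj w u₀.1 := (hN u₀.1).1 hadj_vu
  obtain ⟨p1⟩ := hconn.preconnected ⟨vin, hne⟩ u₀
  obtain ⟨p2⟩ := hconn.preconnected u₀ ⟨z, hzout⟩
  let P1 : G.Walk vin u₀.1 := p1.map (inclHom G {x : V | x ≠ vout})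
  let P2 : G.Walk u₀.1 z := p2.map (inclHom G {x : V | x ≠ vout})
  let Q : G.Walk u₀.1 vout := P2.append (SimpleGraph.Walk.cons hzadj SimpleGraph.Walk.nil)
  let walkA : G.Walk vin vout :=
    P1.append (SimpleGraph.Walk.cons hadj_vu.symm (SimpleGraph.Walk.cons hadj_vu Q))
  let walkB : G.Walk vin vout :=
    P1.append (SimpleGraph.Walk.cons hadj_wu.symm (SimpleGraph.Walk.cons hadj_wu Q))
  have hP1z : P1.support.count vout = 0 := count_vout_map_incl G vout p1
  have hP2z : P2.support.count vout = 0 := count_vout_map_incl G vout p2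
  have hQsup : Q.support = P2.support ++ [vout] := by
    simp [Q, SimpleGraph.Walk.support_append]
  have hAsup : walkA.support = P1.support ++ (v :: Q.support) := by
    simp [walkA, SimpleGraph.Walk.support_append]
  have hBsup : walkB.support = P1.support ++ (w :: Q.support) := by
    simp [walkB, SimpleGraph.Walk.support_append]
  have hQz : Q.support.count vout = 1 := by
    rw [hQsup, List.count_append, hP2z]
    simp
  have hproperA : IsProper walkA := by
    unfold IsProper
    rw [hAsup, List.count_append, List.count_cons, hP1z, hQz]
    simp [hvout]
  have hproperB : IsProper walkB := by
    unfold IsProper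
    rw [hBsup, List.count_append, List.count_cons, hP1z, hQz]
    simp [hwout]
  have htr_diff : trace walkA = trace walkB + evw v w := by
    funext x
    simp only [trace, Pi.add_apply, evw, hAsup, hBsup, List.count_append, List.count_cons,
      beq_iff_eq]
    push_cast
    split_ifs <;> try subst_vars
    all_goals (try (exfalso; exact hvw rfl))
    all_goals (try ring)
    all_goals simp_all
  have hA_mem : trace walkA ∈ S := ⟨walkA, hproperA, rfl⟩
  have hB_mem : trace walkB ∈ S := ⟨walkB, hproperB, rfl⟩
  have hdmem : evw v w ∈ (affineSpan ℝ S).direction := by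
    have h := AffineSubspace.vsub_mem_direction
      (subset_affineSpan ℝ S hA_mem) (subset_affineSpan ℝ S hB_mem)
    have heq : trace walkA -ᵥ trace walkB = evw v w := by
      rw [htr_diff]; funext x; simp
    rwa [heq] at h
  -- unpack relative interior membership
  have hr0 : r ∈ intrinsicInterior ℝ (convexHull ℝ S) := hr
  rw [mem_relint_iff, affineSpan_convexHull] at hr0
  obtain ⟨hrspan, ε, hε, hball⟩ := hr0
  have hrC : r ∈ convexHull ℝ S := intrinsicInterior_subset hr
  have hC1 : ∀ f ∈ convexHull ℝ S, f vout = 1 := by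
    intro f hf
    have hsub : convexHull ℝ S ⊆ {f : V → ℝ | f vout = 1} := by
      apply convexHull_min
      · rintro g ⟨ω, hω, rfl⟩
        have : (ω.support.count vout : ℝ) = 1 := by exact_mod_cast hω
        simpa [trace] using this
      · intro a ha b hb s t hs ht hst
        simp only [Set.mem_setOf_eq] at *
        simp only [Pi.add_apply, Pi.smul_apply, smul_eq_mul, ha, hb]
        linarith
    exact hsub hf
  have hC0 : ∀ f ∈ convexHull ℝ S, ∀ x, 0 ≤ f x := by
    intro f hf
    have hsub : convexHull ℝ S ⊆ {f : V → ℝ | ∀ x, 0 ≤ f x} := by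
      apply convexHull_min
      · rintro g ⟨ω, _, rfl⟩ x
        show (0:ℝ) ≤ (ω.support.count x : ℝ)
        exact_mod_cast Nat.zero_le _
      · intro a ha b hb s t hs ht hst x
        simp only [Pi.add_apply, Pi.smul_apply, smul_eq_mul]
        have := ha x
        have := hb x
        nlinarith
    exact hsub hf
  -- strict positivity at v and w
  have hnorm : (0:ℝ) ≤ ‖evw v w‖ := norm_nonneg _
  set δ : ℝ := ε / (2 * (‖evw v w‖ + 1)) with hδdef
  have hδ : 0 < δ := by positivity
  have hdist : ∀ t : ℝ, |t| ≤ δ → dist (r + t • evw v w) r < ε := by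
    intro t ht
    rw [dist_eq_norm, add_sub_cancel_left, norm_smul, Real.norm_eq_abs]
    have h1 : |t| * ‖evw v w‖ ≤ δ * (‖evw v w‖ + 1) := by
      have := abs_nonneg t
      nlinarith
    have h2 : δ * (‖evw v w‖ + 1) = ε / 2 := by
      rw [hδdef]; field_simp
    rw [h2] at h1
    linarith
  have hmem_aff : ∀ t : ℝ, r + t • evw v w ∈ affineSpan ℝ S := by
    intro t
    have := AffineSubspace.vadd_mem_of_mem_direction
      (Submodule.smul_mem _ t hdmem) hrspan
    simpa [vadd_eq_add, add_comm] using this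
  have hrv : 0 < r v := by
    have h1 : r + (-δ) • evw v w ∈ convexHull ℝ S :=
      hball _ (hmem_aff _) (hdist _ (by rw [abs_neg, abs_of_pos hδ]))
    have h2 := hC0 _ h1 v
    simp [evw] at h2
    linarith
  have hrw : 0 < r w := by
    have h1 : r + δ • evw v w ∈ convexHull ℝ S :=
      hball _ (hmem_aff _) (hdist _ (by rw [abs_of_pos hδ]))
    have h2 := hC0 _ h1 w
    simp [evw, Ne.symm hvw] at h2
    linarith
  have hrvw : 0 < r v + r w := by linarith
  -- the projected trace set
  set S' := traceSet (G.induce {x | x ≠ w}) ⟨vin, hwin.symm⟩ ⟨vout, hwout.symm⟩ with hS'_def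
  have hcin : collapse v w hvw vin = (⟨vin, hwin.symm⟩ : {x : V // x ≠ w}) := by
    rw [collapse]
    rw [dif_neg (fun hh => hwin hh.symm)]
  have hcout : collapse v w hvw vout = (⟨vout, hwout.symm⟩ : {x : V // x ≠ w}) := by
    rw [collapse]
    rw [dif_neg (fun hh => hwout hh.symm)]
  have hkey : Lfun v w '' S = S' := by
    apply Set.Subset.antisymm
    · rintro _ ⟨f, ⟨ω, hω, rfl⟩, rfl⟩
      refine ⟨((ω.map (collapseHom G v w hvw hN)).copy (show (collapseHom G v w hvw hN) vin = (⟨vin, hwin.symm⟩ : ↥{x : V | x ≠ w}) from hcin)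
          (show (collapseHom G v w hvw hN) vout = (⟨vout, hwout.symm⟩ : ↥{x : V | x ≠ w}) from hcout)), ?_, ?_⟩
      · unfold IsProper
        rw [SimpleGraph.Walk.support_copy]
        have h := congrFun (trace_map_collapse G v w hvw hN ω) ⟨vout, hwout.symm⟩
        simp only [trace, Lfun] at h
        rw [if_neg (fun hh : vout = v => hvout hh.symm)] at h
        have h2 : ((ω.map (collapseHom G v w hvw hN)).support.count
            (⟨vout, hwout.symm⟩ : {x : V // x ≠ w}) : ℝ) = 1 := by
          rw [h]; exact_mod_cast hω
        exact_mod_cast h2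
      · funext x
        simp only [trace, SimpleGraph.Walk.support_copy]
        exact (congrFun (trace_map_collapse G v w hvw hN ω) x).symm
    · rintro f' ⟨ω', hω', rfl⟩
      refine ⟨trace (ω'.map (inclHom G {x | x ≠ w})),
        ⟨ω'.map (inclHom G {x | x ≠ w}), ?_, rfl⟩, ?_⟩
      · unfold IsProper
        have h := trace_map_incl G {x | x ≠ w} ω' vout
        simp only [Set.mem_setOf_eq] at h
        rw [dif_pos (Ne.symm hwout)] at h
        simp only [trace] at h
        have h2 : ((ω'.map (inclHom G {x | x ≠ w})).support.count vout : ℝ) = 1 := by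
          rw [h]; exact_mod_cast hω'
        exact_mod_cast h2
      · funext x'
        rcases x' with ⟨x, hx⟩
        simp only [Lfun]
        split_ifs with hxv
        · subst hxv
          rw [trace_map_incl, trace_map_incl]
          simp only [Set.mem_setOf_eq]
          rw [dif_pos hx, dif_neg (fun hh : ¬ w = w => hh rfl), add_zero]
        · rw [trace_map_incl]
          simp only [Set.mem_setOf_eq]
          rw [dif_pos hx]
  have himg_hull : Lfun v w '' (convexHull ℝ S) = convexHull ℝ S' := by
    rw [← hkey]
    exact LinearMap.image_convexHull (Lmap v w) S
  have hspan' : affineSpan ℝ S' = (affineSpan ℝ S).map (Lmap v w).toAffineMap := by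
    rw [AffineSubspace.map_span, ← hkey]
    congr 1
  have hr'mem : Lfun v w r ∈ Psi (G.induce {x | x ≠ w}) ⟨vin, hwin.symm⟩ ⟨vout, hwout.symm⟩ := by
    show Lfun v w r ∈ intrinsicInterior ℝ (convexHull ℝ S')
    rw [mem_relint_iff]
    rw [show affineSpan ℝ ((convexHull ℝ) S') = affineSpan ℝ S' from affineSpan_convexHull S']
    refine ⟨?_, ε, hε, ?_⟩
    · rw [hspan']
      exact ⟨r, hrspan, rfl⟩
    · intro y' hy' hd
      rw [hspan'] at hy'
      obtain ⟨zz, hzz, rfl⟩ := hy'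
      have hyeq : sigmaFun v w hvw (r w) (Lfun v w zz) = zz + (zz w - r w) • evw v w :=
        sigmaFun_Lfun_eq hvw (r w) zz
      have hyspan : sigmaFun v w hvw (r w) (Lfun v w zz) ∈ affineSpan ℝ S := by
        rw [hyeq]
        have := AffineSubspace.vadd_mem_of_mem_direction
          (Submodule.smul_mem _ (zz w - r w) hdmem) hzz
        simpa [vadd_eq_add, add_comm] using this
      have hydist : dist (sigmaFun v w hvw (r w) (Lfun v w zz)) r < ε := by
        have h1 := sigmaFun_dist hvw (r w) (Lfun v w zz) (Lfun v w r)
        rw [sigmaFun_Lfun hvw r] at h1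
        exact lt_of_le_of_lt h1 hd
      have hyC : sigmaFun v w hvw (r w) (Lfun v w zz) ∈ convexHull ℝ S :=
        hball _ hyspan hydist
      have hmem2 : Lfun v w (sigmaFun v w hvw (r w) (Lfun v w zz))
          ∈ Lfun v w '' (convexHull ℝ S) := Set.mem_image_of_mem _ hyC
      rw [Lfun_sigmaFun, himg_hull] at hmem2
      exact hmem2
  obtain ⟨β', hβ'pos, hM', hr'out⟩ := hsolv' _ hr'mem
  set vv' : ↥{x : V | x ≠ w} := ⟨v, hvw⟩ with hvv'def
  set βd : V → ℝ := fun x =>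
    if h : x = w then β' vv' * (r w / (r v + r w))
    else if x = v then β' vv' * (r v / (r v + r w)) else β' ⟨x, h⟩ with hβddef
  have hβd_v : βd v = β' vv' * (r v / (r v + r w)) := by
    simp [hβddef, hvw]
  have hβd_w : βd w = β' vv' * (r w / (r v + r w)) := by
    simp [hβddef]
  have hβd_o : ∀ (x : V) (h : ¬ x = w), x ≠ v → βd x = β' ⟨x, h⟩ := by
    intro x h hxv
    simp [hβddef, h, hxv]
  have hβsum : βd v + βd w = β' vv' := by
    rw [hβd_v, hβd_w, ← mul_add, ← add_div, div_self (ne_of_gt hrvw), mul_one]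
  refine ⟨βd, ?_, ?_, hC1 r hrC⟩
  · intro x
    by_cases h1 : x = w
    · subst h1; rw [hβd_w]; exact mul_pos (hβ'pos _) (div_pos hrw hrvw)
    · by_cases h2 : x = v
      · subst h2; rw [hβd_v]; exact mul_pos (hβ'pos _) (div_pos hrv hrvw)
      · rw [hβd_o x h1 h2]; exact hβ'pos _
  · -- the mulVec identity
    have hβe : ∀ y' : {x : V // x ≠ w},
        (fun u => if h : u = w then 0 else β' ⟨u, h⟩) y'.1 = β' y' := by
      rintro ⟨a, ha⟩; simp [ha]
    have hSeq : ∀ y : {x : V // x ≠ w},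
        (∑ u ∈ Finset.univ.filter (fun u : ↥{x : V | x ≠ w} =>
            (G.induce {x : V | x ≠ w}).Adj u y), β' u)
          = ∑ u ∈ Finset.univ.filter (fun u => G.Adj u y.1), βd u := by
      intro y
      have h1 := sum_subtype_ne (V := V) w β'
        (fun u => if h : u = w then 0 else β' ⟨u, h⟩) hβe (fun u => G.Adj u y.1)
      have h2 : ∑ u ∈ Finset.univ.filter (fun u => G.Adj u y.1 ∧ u ≠ w),
          (fun u => if h : u = w then 0 else β' ⟨u, h⟩) u
          = ∑ u ∈ Finset.univ.filter (fun u => G.Adj u y.1), βd u := by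
        rw [Finset.sum_filter, Finset.sum_filter]
        apply sum_pair_adjust v w hvw
        · intro a hav haw
          by_cases had : G.Adj a y.1
          · rw [if_pos ⟨had, haw⟩, if_pos had, dif_neg haw, hβd_o a haw hav]
          · rw [if_neg (fun hc => had hc.1), if_neg had]
        · by_cases had : G.Adj v y.1
          · have hadw : G.Adj w y.1 := (hN y.1).1 had
            rw [if_pos ⟨had, hvw⟩, if_neg (fun hc : G.Adj w y.1 ∧ w ≠ w => hc.2 rfl),
              if_pos had, if_pos hadw, dif_neg hvw, add_zero, hβsum]
          · have hadw : ¬ G.Adj w y.1 := fun hc => had ((hN y.1).2 hc)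
            rw [if_neg (fun hc : G.Adj v y.1 ∧ v ≠ w => had hc.1),
              if_neg (fun hc : G.Adj w y.1 ∧ w ≠ w => hc.2 rfl),
              if_neg had, if_neg hadw]
      exact h1.trans h2
    have hfilvw : Finset.univ.filter (fun u => G.Adj u w)
        = Finset.univ.filter (fun u => G.Adj u v) := by
      apply Finset.filter_congr
      intro u _
      exact (hadjvw u).symm
    have hT : ∀ (x : V) (hxw : ¬ x = w), x ≠ vout →
        (∑ y' ∈ Finset.univ.filter (fun y' : ↥{x : V | x ≠ w} =>
            (G.induce {x : V | x ≠ w}).Adj ⟨x, hxw⟩ y' ∧ y' ≠ ⟨vout, hwout.symm⟩),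
          Lfun v w r y' / (∑ u ∈ Finset.univ.filter (fun u =>
            (G.induce {x : V | x ≠ w}).Adj u y'), β' u))
        = ∑ y ∈ Finset.univ.filter (fun y => G.Adj x y ∧ y ≠ vout),
            r y / (∑ u ∈ Finset.univ.filter (fun u => G.Adj u y), βd u) := by
      intro x hxw hxout
      have hfil : Finset.univ.filter (fun y' : ↥{x : V | x ≠ w} =>
            (G.induce {x : V | x ≠ w}).Adj ⟨x, hxw⟩ y' ∧ y' ≠ ⟨vout, hwout.symm⟩)
          = Finset.univ.filter (fun y' : ↥{x : V | x ≠ w} =>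
              G.Adj x y'.1 ∧ y'.1 ≠ vout) := by
        apply Finset.filter_congr
        intro y' _
        constructor
        · rintro ⟨h1, h2⟩; exact ⟨h1, fun hc => h2 (Subtype.ext hc)⟩
        · rintro ⟨h1, h2⟩; exact ⟨h1, fun hc => h2 (congrArg Subtype.val hc)⟩
      rw [hfil]
      have hFe : ∀ y' : {x : V // x ≠ w},
          (fun y => (if y = v then r v + r w else r y)
            / (∑ u ∈ Finset.univ.filter (fun u => G.Adj u y), βd u)) y'.1
          = Lfun v w r y' / (∑ u ∈ Finset.univ.filter (fun u =>
              (G.induce {x : V | x ≠ w}).Adj u y'), β' u) := by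
        intro y'
        rw [hSeq y']
        rfl
      have h1 := sum_subtype_ne (V := V) w
        (fun y' => Lfun v w r y' / (∑ u ∈ Finset.univ.filter (fun u =>
          (G.induce {x : V | x ≠ w}).Adj u y'), β' u))
        (fun y => (if y = v then r v + r w else r y)
            / (∑ u ∈ Finset.univ.filter (fun u => G.Adj u y), βd u))
        (fun y' => hFe y') (fun y => G.Adj x y ∧ y ≠ vout)
      refine h1.trans ?_
      rw [Finset.sum_filter, Finset.sum_filter]
      apply sum_pair_adjust v w hvw
      · intro a hav haw
        by_cases had : G.Adj x a ∧ a ≠ vout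
        · rw [if_pos ⟨had, haw⟩, if_pos had, if_neg hav]
        · rw [if_neg (fun hc : (G.Adj x a ∧ a ≠ vout) ∧ a ≠ w => had hc.1), if_neg had]
      · by_cases had : G.Adj x v
        · have hadw : G.Adj x w := (hadjvw x).1 had
          rw [if_pos ⟨⟨had, hvout⟩, hvw⟩,
            if_neg (fun hc : (G.Adj x w ∧ w ≠ vout) ∧ w ≠ w => hc.2 rfl),
            if_pos (⟨had, hvout⟩ : G.Adj x v ∧ v ≠ vout),
            if_pos (⟨hadw, hwout⟩ : G.Adj x w ∧ w ≠ vout), if_pos rfl, hfilvw,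
            add_zero, add_div]
        · have hadw : ¬ G.Adj x w := fun hc => had ((hadjvw x).2 hc)
          rw [if_neg (fun hc : (G.Adj x v ∧ v ≠ vout) ∧ v ≠ w => had hc.1.1),
            if_neg (fun hc : (G.Adj x w ∧ w ≠ vout) ∧ w ≠ w => hc.2 rfl),
            if_neg (fun hc : G.Adj x v ∧ v ≠ vout => had hc.1),
            if_neg (fun hc : G.Adj x w ∧ w ≠ vout => hadw hc.1)]
    -- the key equation at v
    have hv' := congrFun hM' vv'
    rw [Mmat_mulVec_ne (G.induce {x : V | x ≠ w}) ⟨vin, hwin.symm⟩ ⟨vout, hwout.symm⟩ β'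
      (Lfun v w r) vv' (fun hc => hvout (congrArg Subtype.val hc))] at hv'
    have hTv := hT v hvw hvout
    rw [← hvv'def] at hTv
    erw [hTv] at hv'
    rw [if_neg (show ¬ vv' = ⟨vin, hwin.symm⟩ from
      fun hc => hvin (congrArg Subtype.val hc)), zero_add] at hv'
    rw [show Lfun v w r vv' = r v + r w from by simp [Lfun, hvv'def]] at hv'
    -- hv' : r v + r w = β' vv' * T_v
    funext x
    by_cases hxout : x = vout
    · subst hxout; exact Mmat_mulVec_vout G vin _ βd r
    rw [Mmat_mulVec_ne G vin vout βd r x hxout]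
    by_cases hxv : x = v
    · rw [hxv, if_neg hvin, hβd_v]
      rw [show β' vv' * (r v / (r v + r w)) *
          (∑ y ∈ Finset.univ.filter (fun y => G.Adj v y ∧ y ≠ vout),
            r y / (∑ u ∈ Finset.univ.filter (fun u => G.Adj u y), βd u))
        = (r v / (r v + r w)) * (β' vv' *
          (∑ y ∈ Finset.univ.filter (fun y => G.Adj v y ∧ y ≠ vout),
            r y / (∑ u ∈ Finset.univ.filter (fun u => G.Adj u y), βd u))) from by ring]
      rw [hv', div_mul_cancel₀ _ (ne_of_gt hrvw), zero_add]
    by_cases hxw : x = w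
    · have hfilT : Finset.univ.filter (fun y => G.Adj w y ∧ y ≠ vout)
          = Finset.univ.filter (fun y => G.Adj v y ∧ y ≠ vout) := by
        apply Finset.filter_congr
        intro y _
        exact and_congr_left (fun _ => (hN y).symm)
      rw [hxw, if_neg hwin, hfilT, hβd_w]
      rw [show β' vv' * (r w / (r v + r w)) *
          (∑ y ∈ Finset.univ.filter (fun y => G.Adj v y ∧ y ≠ vout),
            r y / (∑ u ∈ Finset.univ.filter (fun u => G.Adj u y), βd u))
        = (r w / (r v + r w)) * (β' vv' *
          (∑ y ∈ Finset.univ.filter (fun y => G.Adj v y ∧ y ≠ vout),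
            r y / (∑ u ∈ Finset.univ.filter (fun u => G.Adj u y), βd u))) from by ring]
      rw [hv', div_mul_cancel₀ _ (ne_of_gt hrvw), zero_add]
    -- generic x
    have hx' := congrFun hM' ⟨x, hxw⟩
    rw [Mmat_mulVec_ne (G.induce {x : V | x ≠ w}) ⟨vin, hwin.symm⟩ ⟨vout, hwout.symm⟩ β'
      (Lfun v w r) ⟨x, hxw⟩ (fun hc => hxout (congrArg Subtype.val hc))] at hx'
    erw [hT x hxw hxout] at hx'
    rw [show Lfun v w r (⟨x, hxw⟩ : ↥{x : V | x ≠ w}) = r x from by simp [Lfun, hxv]] at hx'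
    rw [show Lfun v w r (⟨vout, hwout.symm⟩ : ↥{x : V | x ≠ w}) = r vout from by
      simp only [Lfun]
      rw [if_neg (show ¬ vout = v from fun hc => hvout hc.symm)]] at hx'
    simp only [Subtype.mk.injEq] at hx'
    rw [hβd_o x hxw hxv]
    exact hx'

end
end

section
/- Let G be the path graph on vertices v_1, v_2, …, v_n (n ≥ 3, with v_j adjacent to v_{j+1} for 1 ≤ j ≤ n−1), with v_out = v_1 and v_in = v_n. Then Ψ(G) is exactly the set of vectors of the form 𝟙 + Σ_{j=2}^{n−1} α_j f_j, where f_j = e_j + e_{j+1}, 𝟙 is the all-ones vector in ℝ^n, and α_j > 0 for each 2 ≤ j ≤ n−1. -/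
open scoped Classical

noncomputable section

/-- `f_j = e_j + e_{j+1}` (1-based indexing of the vertices of the path `v_1, …, v_n`,
so vertex `v_j` is index `j - 1` in `Fin n`). -/
def pathF (n : ℕ) (j : ℕ) : Fin n → ℝ :=
  fun i => (if (i : ℕ) + 1 = j then 1 else 0) + (if (i : ℕ) + 1 = j + 1 then 1 else 0)

namespace PsiAux

open SimpleGraph
def upc {n : ℕ} {G : SimpleGraph (Fin n)} {a b : Fin n} (ω : G.Walk a b) (i : ℕ) : ℕ :=
  ω.darts.countP (fun d => decide ((d.toProd.1 : ℕ) = i ∧ (d.toProd.2 : ℕ) = i + 1))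
def dnc {n : ℕ} {G : SimpleGraph (Fin n)} {a b : Fin n} (ω : G.Walk a b) (i : ℕ) : ℕ :=
  ω.darts.countP (fun d => decide ((d.toProd.1 : ℕ) = i + 1 ∧ (d.toProd.2 : ℕ) = i))
lemma balance {n : ℕ} {a b : Fin n} (ω : (pathGraph n).Walk a b) (i : ℕ) :
    dnc ω i + (if (a : ℕ) ≤ i then 1 else 0) = upc ω i + (if (b : ℕ) ≤ i then 1 else 0) := by
  induction ω with
  | nil => rfl
  | @cons u v w h p ih =>
    rw [pathGraph_adj] at h
    simp only [upc, dnc, Walk.darts_cons, List.countP_cons, decide_eq_true_eq] at *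
    rcases h with h | h <;> split_ifs at ih ⊢ <;> omega

lemma count_support {V : Type*} [DecidableEq V] {G : SimpleGraph V} {a b : V}
    (ω : G.Walk a b) (x : V) :
    ω.support.count x
      = (if x = a then 1 else 0) + ω.darts.countP (fun d => decide (d.toProd.2 = x)) := by
  conv_lhs => rw [← SimpleGraph.Walk.cons_map_snd_darts]
  rw [List.count_cons, List.count_eq_countP, List.countP_map]
  have hc : List.countP ((· == x) ∘ (fun d : G.Dart => d.toProd.2)) ω.darts
      = List.countP (fun d : G.Dart => decide (d.toProd.2 = x)) ω.darts := by
    apply List.countP_congr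
    intro d _
    simp only [Function.comp_apply, beq_iff_eq, decide_eq_true_eq]
  rw [hc]
  by_cases h : x = a
  · subst h
    rw [if_pos rfl, if_pos (by simp), Nat.add_comm]
  · rw [if_neg h, if_neg (by simp [beq_iff_eq]; exact fun e => h e.symm), Nat.add_zero,
      Nat.zero_add]

lemma countP_split {α : Type*} (p q r : α → Bool) (l : List α)
    (h : ∀ x ∈ l, (p x = true ↔ (q x = true ∨ r x = true)) ∧ ¬(q x = true ∧ r x = true)) :
    l.countP p = l.countP q + l.countP r := by
  induction l with
  | nil => simp
  | cons a l ih =>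
    have ha := h a (by simp)
    simp only [List.countP_cons]
    rw [ih (fun x hx => h x (by simp [hx]))]
    rcases hq : q a <;> rcases hr : r a <;> rcases hp : p a <;>
      simp [hq, hr, hp] at ha ⊢ <;> omega

lemma upc_eq_zero_of_big {n : ℕ} {a b : Fin n} (ω : (SimpleGraph.pathGraph n).Walk a b)
    {i : ℕ} (hi : n ≤ i + 1) : upc ω i = 0 := by
  rw [upc, List.countP_eq_zero]
  intro d _
  simp only [decide_eq_true_eq]
  intro h
  exact absurd (d.toProd.2.isLt) (by omega)

lemma dnc_eq_zero_of_big {n : ℕ} {a b : Fin n} (ω : (SimpleGraph.pathGraph n).Walk a b)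
    {i : ℕ} (hi : n ≤ i + 1) : dnc ω i = 0 := by
  rw [dnc, List.countP_eq_zero]
  intro d _
  simp only [decide_eq_true_eq]
  intro h
  exact absurd (d.toProd.1.isLt) (by omega)

lemma countP_snd {n : ℕ} {a b : Fin n} (ω : (SimpleGraph.pathGraph n).Walk a b) (i : ℕ)
    (hi : i < n) :
    ω.darts.countP (fun d => decide (d.toProd.2 = (⟨i, hi⟩ : Fin n)))
      = dnc ω i + (if i = 0 then 0 else upc ω (i - 1)) := by
  rcases Nat.eq_zero_or_pos i with h0 | h0
  · subst h0
    rw [if_pos rfl, Nat.add_zero]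
    apply List.countP_congr
    intro d _
    have hadj := d.adj
    rw [SimpleGraph.pathGraph_adj] at hadj
    simp only [decide_eq_true_eq, Fin.ext_iff, Fin.val_mk]
    omega
  · rw [if_neg (by omega)]
    apply countP_split
    intro d _
    have hadj := d.adj
    rw [SimpleGraph.pathGraph_adj] at hadj
    simp only [decide_eq_true_eq, Fin.ext_iff, Fin.val_mk]
    omega

/-- Master count formula for walks from `⟨n-1⟩` to `⟨0⟩` in the path graph. -/
lemma count_master {n : ℕ} (hn : 3 ≤ n)
    (ω : (SimpleGraph.pathGraph n).Walk ⟨n - 1, Nat.sub_lt (Nat.lt_of_lt_of_le (by decide : 0 < 3) hn) Nat.one_pos⟩ ⟨0, Nat.lt_of_lt_of_le (by decide : 0 < 3) hn⟩)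
    (i : ℕ) (hi : i < n) :
    ω.support.count (⟨i, hi⟩ : Fin n)
      = (if i = n - 1 then 1 else 0) + (if i + 1 ≤ n - 1 then upc ω i + 1 else 0)
          + (if i = 0 then 0 else upc ω (i - 1)) := by
  have hb := balance ω i
  have hcs := count_support ω (⟨i, hi⟩ : Fin n)
  rw [countP_snd ω i hi] at hcs
  simp only [Fin.mk.injEq, Fin.val_mk] at hb hcs ⊢
  rw [hcs]
  rcases Nat.lt_or_ge (i + 1) n with hc | hc
  · split_ifs at hb ⊢ <;> omega
  · have h1 := upc_eq_zero_of_big ω hc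
    have h2 := dnc_eq_zero_of_big ω hc
    split_ifs at hb ⊢ <;> omega

lemma sum_pathF_apply {n : ℕ} (c : ℕ → ℝ) (i : ℕ) (hi : i < n) :
    (∑ j ∈ Finset.Icc 2 (n - 1), c j • pathF n j) ⟨i, hi⟩
      = (if 2 ≤ i + 1 ∧ i + 1 ≤ n - 1 then c (i + 1) else 0)
        + (if 2 ≤ i ∧ i ≤ n - 1 then c i else 0) := by
  rw [Finset.sum_apply]
  have hcg : ∀ j ∈ Finset.Icc 2 (n - 1), (c j • pathF n j) (⟨i, hi⟩ : Fin n)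
      = (if j = i + 1 then c j else 0) + (if j = i then c j else 0) := by
    intro j hj
    simp only [Pi.smul_apply, pathF, Fin.val_mk, smul_eq_mul]
    rw [mul_add]
    congr 1
    · by_cases h : i + 1 = j
      · rw [if_pos h, if_pos h.symm, mul_one]
      · rw [if_neg h, if_neg (fun e => h e.symm), mul_zero]
    · by_cases h : j = i
      · rw [if_pos (by omega), if_pos h, mul_one]
      · rw [if_neg (by omega), if_neg h, mul_zero]
  rw [Finset.sum_congr rfl hcg, Finset.sum_add_distrib, Finset.sum_ite_eq',
    Finset.sum_ite_eq']
  simp only [Finset.mem_Icc]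

lemma trace_master {n : ℕ} (hn : 3 ≤ n)
    (ω : (SimpleGraph.pathGraph n).Walk ⟨n - 1, Nat.sub_lt (Nat.lt_of_lt_of_le (by decide : 0 < 3) hn) Nat.one_pos⟩ ⟨0, Nat.lt_of_lt_of_le (by decide : 0 < 3) hn⟩)
    (hp : upc ω 0 = 0) :
    trace ω = (fun _ => 1)
      + ∑ j ∈ Finset.Icc 2 (n - 1), ((upc ω (j - 1) : ℝ)) • pathF n j := by
  funext x
  obtain ⟨i, hi⟩ := x
  show ((ω.support.count (⟨i, hi⟩ : Fin n) : ℕ) : ℝ) = _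
  rw [Pi.add_apply, sum_pathF_apply (fun j => (upc ω (j - 1) : ℝ)) i hi,
    count_master hn ω i hi]
  have e1 : i + 1 - 1 = i := by omega
  rw [e1]
  by_cases hi0 : i = 0
  · subst hi0
    simp only [hp, Nat.zero_sub]
    split_ifs <;>
      first
        | (exfalso; first | omega | exact (by assumption : False))
        | (push_cast; ring)
        | norm_num
  by_cases hi1 : i = 1
  · subst hi1
    rw [show (1:ℕ) - 1 = 0 from rfl, hp]
    split_ifs <;>
      first
        | (exfalso; first | omega | exact (by assumption : False))
        | (push_cast; ring)
        | norm_num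
  · split_ifs <;>
      first
        | (exfalso; first | omega | exact (by assumption : False))
        | (push_cast; ring)
        | norm_num

lemma isProper_iff {n : ℕ} (hn : 3 ≤ n)
    (ω : (SimpleGraph.pathGraph n).Walk ⟨n - 1, Nat.sub_lt (Nat.lt_of_lt_of_le (by decide : 0 < 3) hn) Nat.one_pos⟩ ⟨0, Nat.lt_of_lt_of_le (by decide : 0 < 3) hn⟩) :
    IsProper ω ↔ upc ω 0 = 0 := by
  unfold IsProper
  rw [count_master hn ω 0 (by omega)]
  rw [if_neg (by omega), if_pos (by omega), if_pos rfl]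
  omega

lemma path_adj_up {n : ℕ} {i : ℕ} (h : i + 1 < n) :
    (SimpleGraph.pathGraph n).Adj ⟨i, by omega⟩ ⟨i + 1, h⟩ := by
  rw [SimpleGraph.pathGraph_adj]
  left
  rfl

def bounce {n : ℕ} (i : ℕ) (h : i + 1 < n) :
    ℕ → (SimpleGraph.pathGraph n).Walk ⟨i, by omega⟩ ⟨i, by omega⟩
  | 0 => SimpleGraph.Walk.nil
  | c + 1 => SimpleGraph.Walk.cons (path_adj_up h)
      (SimpleGraph.Walk.cons (path_adj_up h).symm (bounce i h c))

def desc {n : ℕ} (u : ℕ → ℕ) :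
    (m : ℕ) → (h : m < n) → (SimpleGraph.pathGraph n).Walk ⟨m, h⟩ ⟨0, by omega⟩
  | 0, _ => SimpleGraph.Walk.nil
  | m + 1, h => SimpleGraph.Walk.cons (path_adj_up h).symm
      ((bounce m h (u m)).append (desc u m (by omega)))

lemma upc_bounce {n : ℕ} (i : ℕ) (h : i + 1 < n) (c : ℕ) (k : ℕ) :
    upc (bounce i h c) k = if k = i then c else 0 := by
  induction c with
  | zero => simp [bounce, upc]
  | succ c ih =>
    simp only [bounce, upc, SimpleGraph.Walk.darts_cons, List.countP_cons,
      decide_eq_true_eq, Fin.val_mk] at ih ⊢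
    split_ifs at ih ⊢ <;> omega

lemma upc_desc {n : ℕ} (u : ℕ → ℕ) (m : ℕ) (h : m < n) (k : ℕ) :
    upc (desc u m h) k = if k < m then u k else 0 := by
  induction m with
  | zero => simp [desc, upc]
  | succ m ih =>
    have hb := upc_bounce m h (u m) k
    simp only [desc, upc, SimpleGraph.Walk.darts_cons, SimpleGraph.Walk.darts_append,
      List.countP_cons, List.countP_append, decide_eq_true_eq, Fin.val_mk] at ih hb ⊢
    rw [ih (by omega), hb]
    by_cases hkm : k = m
    · subst hkm
      rw [if_pos rfl, if_neg (show ¬ k < k by omega),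
        if_neg (show ¬(k + 1 = k ∧ k = k + 1) by omega), if_pos (show k < k + 1 by omega)]
      omega
    · rw [if_neg hkm]
      by_cases hkl : k < m
      · rw [if_pos hkl, if_neg (show ¬(m + 1 = k ∧ m = k + 1) by omega),
          if_pos (show k < m + 1 by omega)]
        omega
      · rw [if_neg hkl, if_neg (show ¬(m + 1 = k ∧ m = k + 1) by omega),
          if_neg (show ¬ k < m + 1 by omega)]

lemma exists_walk {n : ℕ} (hn : 3 ≤ n) (c : ℕ → ℕ) :
    ∃ ω : (SimpleGraph.pathGraph n).Walk ⟨n - 1, Nat.sub_lt (Nat.lt_of_lt_of_le (by decide : 0 < 3) hn) Nat.one_pos⟩ ⟨0, Nat.lt_of_lt_of_le (by decide : 0 < 3) hn⟩,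
      IsProper ω ∧ trace ω
        = (fun _ => 1) + ∑ j ∈ Finset.Icc 2 (n - 1), ((c j : ℕ) : ℝ) • pathF n j := by
  set u : ℕ → ℕ := fun k => if k = 0 then 0 else c (k + 1) with hu
  refine ⟨desc u (n - 1) (by omega), ?_, ?_⟩
  · rw [IsProper, count_master hn _ 0 (by omega), upc_desc u (n - 1) (by omega) 0]
    simp only [hu]
    split_ifs <;> omega
  · have h0 : upc (desc u (n - 1) (by omega : n - 1 < n)) 0 = 0 := by
      rw [upc_desc]; simp [hu]
    rw [trace_master hn _ h0]
    congr 1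
    apply Finset.sum_congr rfl
    intro j hj
    rw [Finset.mem_Icc] at hj
    rw [upc_desc u (n - 1) (by omega) (j - 1), if_pos (by omega)]
    simp only [hu]
    rw [if_neg (by omega), show j - 1 + 1 = j by omega]

lemma traceSet_eq {n : ℕ} (hn : 3 ≤ n) :
    traceSet (SimpleGraph.pathGraph n) ⟨n - 1, Nat.sub_lt (Nat.lt_of_lt_of_le (by decide : 0 < 3) hn) Nat.one_pos⟩ ⟨0, Nat.lt_of_lt_of_le (by decide : 0 < 3) hn⟩
      = {f | ∃ c : ℕ → ℕ,
          f = (fun _ => 1) + ∑ j ∈ Finset.Icc 2 (n - 1), ((c j : ℕ) : ℝ) • pathF n j} := by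
  ext f
  constructor
  · rintro ⟨ω, hprop, rfl⟩
    refine ⟨fun j => upc ω (j - 1), ?_⟩
    have h0 : upc ω 0 = 0 := (isProper_iff hn ω).mp hprop
    exact trace_master hn ω h0
  · rintro ⟨c, rfl⟩
    obtain ⟨ω, hprop, htr⟩ := exists_walk hn c
    exact ⟨ω, hprop, htr.symm⟩

/-- The index type for the coefficients. -/
abbrev Jty (n : ℕ) := {j // j ∈ Finset.Icc 2 (n - 1)}

/-- The linear part of the parametrization. -/
def lmap (n : ℕ) : ((Jty n) → ℝ) →ₗ[ℝ] (Fin n → ℝ) where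
  toFun := fun α => ∑ j : Jty n, α j • pathF n (j : ℕ)
  map_add' := by
    intro α β
    simp only [Pi.add_apply, add_smul]
    rw [Finset.sum_add_distrib]
  map_smul' := by
    intro c α
    simp only [Pi.smul_apply, smul_eq_mul, RingHom.id_apply]
    rw [Finset.smul_sum]
    congr 1
    funext j
    rw [smul_smul]

/-- The affine parametrization `α ↦ 𝟙 + ∑ α_j f_j`. -/
def Tmap (n : ℕ) : ((Jty n) → ℝ) →ᵃ[ℝ] (Fin n → ℝ) :=
  (lmap n).toAffineMap + AffineMap.const ℝ ((Jty n) → ℝ) (fun _ => (1 : ℝ))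

lemma Tmap_apply {n : ℕ} (α : (Jty n) → ℝ) :
    Tmap n α = (fun _ => 1) + ∑ j : Jty n, α j • pathF n (j : ℕ) := by
  show (lmap n) α + (fun _ => (1:ℝ)) = _
  rw [add_comm]
  rfl

lemma Tmap_apply' {n : ℕ} (c : ℕ → ℝ) :
    Tmap n (fun j => c (j : ℕ))
      = (fun _ => 1) + ∑ j ∈ Finset.Icc 2 (n - 1), c j • pathF n j := by
  rw [Tmap_apply]
  congr 1
  exact Finset.sum_coe_sort (Finset.Icc 2 (n - 1)) (fun j => c j • pathF n j)

lemma convexHull_natCast : convexHull ℝ (Set.range ((↑) : ℕ → ℝ)) = Set.Ici 0 := by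
  apply Set.Subset.antisymm
  · intro x hx
    refine convexHull_min (fun y hy => ?_) (convex_Ici 0) hx
    obtain ⟨m, rfl⟩ := hy
    exact Set.mem_Ici.mpr (Nat.cast_nonneg m)
  · intro x hx
    have hx0 : (0 : ℝ) ≤ x := hx
    have hseg : x ∈ segment ℝ ((⌊x⌋₊ : ℕ) : ℝ) (((⌊x⌋₊ + 1 : ℕ) : ℝ)) := by
      rw [segment_eq_Icc (by push_cast; linarith [Nat.lt_floor_add_one x, Nat.floor_le hx0])]
      constructor
      · exact Nat.floor_le hx0
      · push_cast
        exact (Nat.lt_floor_add_one x).le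
    exact segment_subset_convexHull (Set.mem_range_self _) (Set.mem_range_self _) hseg

lemma traceSet_image {n : ℕ} (hn : 3 ≤ n) :
    traceSet (SimpleGraph.pathGraph n) ⟨n - 1, Nat.sub_lt (Nat.lt_of_lt_of_le (by decide : 0 < 3) hn) Nat.one_pos⟩ ⟨0, Nat.lt_of_lt_of_le (by decide : 0 < 3) hn⟩
      = Tmap n '' (Set.pi Set.univ (fun _ : Jty n => Set.range ((↑) : ℕ → ℝ))) := by
  rw [traceSet_eq hn]
  ext f
  constructor
  · rintro ⟨c, rfl⟩
    refine ⟨fun j => ((c (j : ℕ) : ℕ) : ℝ), fun j _ => ⟨c (j : ℕ), rfl⟩, ?_⟩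
    exact Tmap_apply' (fun j => ((c j : ℕ) : ℝ))
  · rintro ⟨α, hα, rfl⟩
    have hch : ∀ j : Jty n, ∃ m : ℕ, (m : ℝ) = α j := fun j => hα j (Set.mem_univ j)
    choose m hm using hch
    refine ⟨fun j => if h : j ∈ Finset.Icc 2 (n - 1) then m ⟨j, h⟩ else 0, ?_⟩
    rw [← Tmap_apply' (fun j => ((if h : j ∈ Finset.Icc 2 (n - 1) then m ⟨j, h⟩ else 0 : ℕ) : ℝ))]
    congr 1
    funext j
    rw [dif_pos j.2, hm ⟨(j : ℕ), j.2⟩]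

lemma hull_eq {n : ℕ} (hn : 3 ≤ n) :
    convexHull ℝ (traceSet (SimpleGraph.pathGraph n) ⟨n - 1, Nat.sub_lt (Nat.lt_of_lt_of_le (by decide : 0 < 3) hn) Nat.one_pos⟩ ⟨0, Nat.lt_of_lt_of_le (by decide : 0 < 3) hn⟩)
      = Tmap n '' {α : (Jty n) → ℝ | ∀ j, 0 ≤ α j} := by
  rw [traceSet_image hn, ← AffineMap.image_convexHull, convexHull_pi]
  have hpi : (Set.univ.pi fun _ : Jty n => convexHull ℝ (Set.range ((↑) : ℕ → ℝ)))
      = {α : (Jty n) → ℝ | ∀ j, 0 ≤ α j} := by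
    ext α
    rw [Set.mem_pi]
    constructor
    · intro h j
      have := h j (Set.mem_univ j)
      rw [convexHull_natCast] at this
      exact this
    · intro h j _
      rw [convexHull_natCast]
      exact h j
  rw [hpi]

/-- The dual linear functional `b_j`. -/
def bmap (n j : ℕ) : ((Fin n → ℝ)) →ₗ[ℝ] ℝ where
  toFun := fun y => ∑ i : Fin n,
    (if 1 ≤ (i : ℕ) ∧ (i : ℕ) < j then (-1 : ℝ) ^ (j - 1 - (i : ℕ)) else 0) * y i
  map_add' := by
    intro y z
    simp only [Pi.add_apply, mul_add]
    rw [Finset.sum_add_distrib]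
  map_smul' := by
    intro c y
    simp only [Pi.smul_apply, smul_eq_mul, RingHom.id_apply]
    rw [Finset.mul_sum]
    congr 1
    funext i
    ring

lemma sum_fin_ite {n : ℕ} (t : ℕ) (ht : t < n) (c : ℝ) :
    ∑ i : Fin n, (if (i : ℕ) = t then c else 0) = c := by
  rw [Finset.sum_eq_single (⟨t, ht⟩ : Fin n)]
  · rw [if_pos rfl]
  · intro b _ hb
    rw [if_neg (fun e => hb (Fin.ext e))]
  · intro h
    exact absurd (Finset.mem_univ _) h

lemma bmap_pathF {n : ℕ} (hn : 3 ≤ n) {j k : ℕ} (hj : j ∈ Finset.Icc 2 (n - 1))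
    (hk : k ∈ Finset.Icc 2 (n - 1)) :
    bmap n j (pathF n k) = if k = j then 1 else 0 := by
  rw [Finset.mem_Icc] at hj hk
  have hsplit : ∀ i : Fin n,
      (if 1 ≤ (i : ℕ) ∧ (i : ℕ) < j then (-1 : ℝ) ^ (j - 1 - (i : ℕ)) else 0) * pathF n k i
        = (if (i : ℕ) = k - 1 then
            (if 1 ≤ k - 1 ∧ k - 1 < j then (-1 : ℝ) ^ (j - 1 - (k - 1)) else 0) else 0)
          + (if (i : ℕ) = k then
            (if 1 ≤ k ∧ k < j then (-1 : ℝ) ^ (j - 1 - k) else 0) else 0) := by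
    intro i
    simp only [pathF]
    rw [mul_add]
    congr 1
    · by_cases h : (i : ℕ) = k - 1
      · rw [if_pos (show (i : ℕ) + 1 = k by omega), mul_one, if_pos h, h]
      · rw [if_neg (show ¬((i : ℕ) + 1 = k) by omega), mul_zero, if_neg h]
    · by_cases h : (i : ℕ) = k
      · rw [if_pos (show (i : ℕ) + 1 = k + 1 by omega), mul_one, if_pos h, h]
      · rw [if_neg (show ¬((i : ℕ) + 1 = k + 1) by omega), mul_zero, if_neg h]
  show (∑ i : Fin n, _) = _
  rw [Finset.sum_congr rfl (fun i _ => hsplit i), Finset.sum_add_distrib,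
    sum_fin_ite (k - 1) (by omega) _, sum_fin_ite k (by omega) _]
  by_cases h1 : k < j
  · rw [if_pos (show 1 ≤ k - 1 ∧ k - 1 < j by omega),
      if_pos (show 1 ≤ k ∧ k < j by omega),
      if_neg (show ¬ k = j by omega),
      show j - 1 - (k - 1) = (j - 1 - k) + 1 by omega, pow_succ]
    ring
  · by_cases h2 : k = j
    · rw [if_pos (show 1 ≤ k - 1 ∧ k - 1 < j by omega),
        if_neg (show ¬(1 ≤ k ∧ k < j) by omega),
        if_pos h2, show j - 1 - (k - 1) = 0 by omega, pow_zero, add_zero]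
    · rw [if_neg (show ¬(1 ≤ k - 1 ∧ k - 1 < j) by omega),
        if_neg (show ¬(1 ≤ k ∧ k < j) by omega),
        if_neg h2, add_zero]

lemma bmap_Tmap {n : ℕ} (hn : 3 ≤ n) (α : (Jty n) → ℝ) (j : Jty n) :
    bmap n (j : ℕ) (Tmap n α)
      = bmap n (j : ℕ) (fun _ => 1) + α j := by
  rw [Tmap_apply, map_add, map_sum]
  congr 1
  have hterm : ∀ k : Jty n,
      bmap n (j : ℕ) (α k • pathF n (k : ℕ)) = if k = j then α k else 0 := by
    intro k
    rw [map_smul, smul_eq_mul, bmap_pathF hn j.2 k.2]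
    by_cases h : (k : ℕ) = (j : ℕ)
    · rw [if_pos h, if_pos (Subtype.ext h), mul_one]
    · rw [if_neg h, if_neg (fun e => h (congrArg Subtype.val e)), mul_zero]
  rw [Finset.sum_congr rfl (fun k _ => hterm k), Finset.sum_ite_eq' Finset.univ j α,
    if_pos (Finset.mem_univ j)]

/-- The linear map whose level set through `𝟙` contains the affine span. -/
def gmap (n : ℕ) : ((Fin n → ℝ)) →ₗ[ℝ] (Fin n → ℝ) :=
  LinearMap.id - ∑ j : Jty n, (bmap n (j : ℕ)).smulRight (pathF n (j : ℕ))

lemma gmap_apply {n : ℕ} (y : Fin n → ℝ) :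
    gmap n y = y - ∑ j : Jty n, bmap n (j : ℕ) y • pathF n (j : ℕ) := by
  simp only [gmap, LinearMap.sub_apply, LinearMap.id_apply, LinearMap.sum_apply,
    LinearMap.smulRight_apply]

lemma sum_ite_smul_pathF {n : ℕ} (jj : Jty n) (c : ℝ) :
    (∑ k : Jty n, (if (k : ℕ) = (jj : ℕ) then c else 0) • pathF n (k : ℕ))
      = c • pathF n (jj : ℕ) := by
  have hterm : ∀ k : Jty n,
      (if (k : ℕ) = (jj : ℕ) then c else 0) • pathF n (k : ℕ)
        = if k = jj then c • pathF n (k : ℕ) else 0 := by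
    intro k
    by_cases h : (k : ℕ) = (jj : ℕ)
    · rw [if_pos h, if_pos (Subtype.ext h)]
    · rw [if_neg h, if_neg (fun e => h (congrArg Subtype.val e)), zero_smul]
  rw [Finset.sum_congr rfl (fun k _ => hterm k),
    Finset.sum_ite_eq' Finset.univ jj (fun k => c • pathF n (k : ℕ)),
    if_pos (Finset.mem_univ jj)]

lemma gmap_pathF {n : ℕ} (hn : 3 ≤ n) (k : Jty n) :
    gmap n (pathF n (k : ℕ)) = 0 := by
  rw [gmap_apply, sub_eq_zero]
  have hterm : ∀ j : Jty n,
      bmap n (j : ℕ) (pathF n (k : ℕ)) • pathF n (j : ℕ)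
        = (if (j : ℕ) = (k : ℕ) then (1:ℝ) else 0) • pathF n (j : ℕ) := by
    intro j
    rw [bmap_pathF hn j.2 k.2]
    congr 1
    by_cases h : (k : ℕ) = (j : ℕ)
    · rw [if_pos h, if_pos h.symm]
    · rw [if_neg h, if_neg (fun e => h e.symm)]
  rw [Finset.sum_congr rfl (fun j _ => hterm j), sum_ite_smul_pathF k 1, one_smul]

lemma gmap_Tmap {n : ℕ} (hn : 3 ≤ n) (α : (Jty n) → ℝ) :
    gmap n (Tmap n α) = gmap n (fun _ => 1) := by
  rw [Tmap_apply, map_add, map_sum]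
  have hterm : ∀ k : Jty n, gmap n (α k • pathF n (k : ℕ)) = 0 := by
    intro k
    rw [map_smul, gmap_pathF hn k, smul_zero]
  rw [Finset.sum_congr rfl (fun k _ => hterm k), Finset.sum_const_zero, add_zero]

lemma rep_of_gmap {n : ℕ} (y : Fin n → ℝ)
    (hy : gmap n y = gmap n (fun _ => 1)) :
    y = Tmap n (fun j => bmap n (j : ℕ) y - bmap n (j : ℕ) (fun _ => 1)) := by
  rw [Tmap_apply]
  rw [gmap_apply, gmap_apply] at hy
  have hsum : (∑ j : Jty n,
      (bmap n (j : ℕ) y - bmap n (j : ℕ) (fun _ => 1)) • pathF n (j : ℕ))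
        = (∑ j : Jty n, bmap n (j : ℕ) y • pathF n (j : ℕ))
          - ∑ j : Jty n, bmap n (j : ℕ) (fun _ => 1) • pathF n (j : ℕ) := by
    rw [← Finset.sum_sub_distrib]
    congr 1
    funext j
    rw [sub_smul]
  rw [hsum]
  set Sy := ∑ j : Jty n, bmap n (j : ℕ) y • pathF n (j : ℕ)
  set So := ∑ j : Jty n, bmap n (j : ℕ) (fun _ => (1:ℝ)) • pathF n (j : ℕ)
  calc y = (y - Sy) + Sy := by abel
  _ = ((fun _ => 1) - So) + Sy := by rw [hy]
  _ = (fun _ => 1) + (Sy - So) := by abel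

/-- The affine subspace `{y | g y = g 𝟙}` containing the affine span of the hull. -/
def Asub (n : ℕ) : AffineSubspace ℝ (Fin n → ℝ) where
  carrier := {y | gmap n y = gmap n (fun _ => 1)}
  smul_vsub_vadd_mem' := by
    intro c p1 p2 p3 h1 h2 h3
    show gmap n (c • (p1 -ᵥ p2) +ᵥ p3) = _
    have he : c • (p1 -ᵥ p2) +ᵥ p3 = c • (p1 - p2) + p3 := rfl
    rw [he, map_add, map_smul, map_sub]
    rw [Set.mem_setOf_eq] at h1 h2 h3
    rw [h1, h2, h3]
    simp

lemma mem_Asub {n : ℕ} {y : Fin n → ℝ} :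
    y ∈ Asub n ↔ gmap n y = gmap n (fun _ => 1) := Iff.rfl

end PsiAux

/-- For the path graph on `v_1, …, v_n` with `vout = v_1`, `vin = v_n`, the set `Ψ(G)` is
precisely the set of vectors `𝟙 + Σ_{j=2}^{n-1} α_j f_j` with all `α_j > 0`. -/
theorem Psi_pathGraph (n : ℕ) (hn : 3 ≤ n) :
    Psi (SimpleGraph.pathGraph n) ⟨n - 1, by omega⟩ ⟨0, by omega⟩ =
      {r : Fin n → ℝ | ∃ α : ℕ → ℝ, (∀ j ∈ Finset.Icc 2 (n - 1), 0 < α j) ∧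
        r = (fun _ => 1) + ∑ j ∈ Finset.Icc 2 (n - 1), α j • pathF n j} := by
  classical
  open PsiAux in
  show intrinsicInterior ℝ
      (convexHull ℝ (traceSet (SimpleGraph.pathGraph n) ⟨n - 1, by omega⟩ ⟨0, by omega⟩)) = _
  rw [PsiAux.hull_eq hn]
  set C : Set (Fin n → ℝ) := PsiAux.Tmap n '' {α : PsiAux.Jty n → ℝ | ∀ j, 0 ≤ α j} with hCdef
  have honeC : (fun _ => (1:ℝ)) ∈ C := by
    refine ⟨0, fun j => le_rfl, ?_⟩
    rw [PsiAux.Tmap_apply]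
    simp
  have hxjC : ∀ jj : PsiAux.Jty n, ((fun _ => (1:ℝ)) + pathF n (jj : ℕ)) ∈ C := by
    intro jj
    refine ⟨fun k => if (k : ℕ) = (jj : ℕ) then 1 else 0, ?_, ?_⟩
    · intro k
      by_cases h : (k : ℕ) = (jj : ℕ) <;> simp [h]
    · rw [PsiAux.Tmap_apply, PsiAux.sum_ite_smul_pathF jj 1, one_smul]
  have hle : affineSpan ℝ C ≤ PsiAux.Asub n := by
    rw [affineSpan_le]
    rintro z ⟨α, hα, rfl⟩
    exact PsiAux.gmap_Tmap hn α
  have hCb : ∀ z ∈ C, ∀ j : PsiAux.Jty n,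
      PsiAux.bmap n (j : ℕ) (fun _ => 1) ≤ PsiAux.bmap n (j : ℕ) z := by
    rintro z ⟨α, hα, rfl⟩ j
    rw [PsiAux.bmap_Tmap hn α j]
    linarith [hα j]
  ext x
  constructor
  · -- intrinsic interior ⊆ positive coefficients
    intro hx
    have hxC : x ∈ C := intrinsicInterior_subset hx
    obtain ⟨α, hα, hxT⟩ := hxC
    refine ⟨fun j => if h : j ∈ Finset.Icc 2 (n - 1) then α ⟨j, h⟩ else 1, ?_, ?_⟩
    · intro j hj
      show 0 < if h : j ∈ Finset.Icc 2 (n - 1) then α ⟨j, h⟩ else 1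
      rw [dif_pos hj]
      by_contra hle0
      push_neg at hle0
      have hzero : α ⟨j, hj⟩ = 0 := le_antisymm hle0 (hα _)
      set jj : PsiAux.Jty n := ⟨j, hj⟩ with hjj
      obtain ⟨y, hyInt, hyx⟩ := mem_intrinsicInterior.mp hx
      have hfd : pathF n (jj : ℕ) ∈ (affineSpan ℝ C).direction := by
        have hv := AffineSubspace.vsub_mem_direction
          (subset_affineSpan ℝ C (hxjC jj)) (subset_affineSpan ℝ C honeC)
        have he : ((fun _ => (1:ℝ)) + pathF n (jj : ℕ)) -ᵥ (fun _ => (1:ℝ))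
            = pathF n (jj : ℕ) := by
          show ((fun _ => (1:ℝ)) + pathF n (jj : ℕ)) - (fun _ => (1:ℝ)) = pathF n (jj : ℕ)
          abel
        rwa [he] at hv
      have hmem : ∀ t : ℝ, x - t • pathF n (jj : ℕ) ∈ affineSpan ℝ C := by
        intro t
        have hsm := AffineSubspace.vadd_mem_of_mem_direction
          (Submodule.smul_mem (affineSpan ℝ C).direction (-t) hfd)
          (subset_affineSpan ℝ C ⟨α, hα, hxT⟩)
        have he : (-t) • pathF n (jj : ℕ) +ᵥ x = x - t • pathF n (jj : ℕ) := by
          show (-t) • pathF n (jj : ℕ) + x = x - t • pathF n (jj : ℕ)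
          rw [neg_smul]
          abel
        rwa [he] at hsm
      set γ : ℝ → affineSpan ℝ C := fun t => ⟨x - t • pathF n (jj : ℕ), hmem t⟩ with hγ
      have hγc : Continuous γ :=
        Continuous.subtype_mk (continuous_const.sub (continuous_id.smul continuous_const)) _
      have hγ0 : γ 0 = y := by
        apply Subtype.ext
        rw [hyx]
        show x - (0 : ℝ) • pathF n (jj : ℕ) = x
        rw [zero_smul, sub_zero]
      have hV : IsOpen (γ ⁻¹' interior (Subtype.val ⁻¹' C)) :=
        hγc.isOpen_preimage _ isOpen_interior
      have h0V : (0 : ℝ) ∈ γ ⁻¹' interior (Subtype.val ⁻¹' C) := by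
        rw [Set.mem_preimage, hγ0]
        exact hyInt
      obtain ⟨ε, hε, hball⟩ := Metric.isOpen_iff.mp hV 0 h0V
      have htV : (ε / 2) ∈ γ ⁻¹' interior (Subtype.val ⁻¹' C) := by
        apply hball
        rw [Metric.mem_ball, Real.dist_eq, sub_zero, abs_of_pos (by linarith)]
        linarith
      have htV' : γ (ε / 2) ∈ interior (Subtype.val ⁻¹' C) := htV
      have htV'' : γ (ε / 2) ∈ Subtype.val ⁻¹' C :=
        interior_subset (s := Subtype.val ⁻¹' C) htV'
      have hin : (x - (ε / 2) • pathF n (jj : ℕ)) ∈ C := htV''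
      have hge := hCb _ hin jj
      have hbf : PsiAux.bmap n (jj : ℕ) (pathF n (jj : ℕ)) = 1 := by
        rw [PsiAux.bmap_pathF hn jj.2 jj.2, if_pos rfl]
      have hbx : PsiAux.bmap n (jj : ℕ) x = PsiAux.bmap n (jj : ℕ) (fun _ => 1) := by
        rw [← hxT, PsiAux.bmap_Tmap hn α jj, hzero, add_zero]
      rw [map_sub, map_smul, smul_eq_mul, hbf, mul_one, hbx] at hge
      linarith
    · rw [← PsiAux.Tmap_apply'
        (fun j => if h : j ∈ Finset.Icc 2 (n - 1) then α ⟨j, h⟩ else 1), ← hxT]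
      congr 1
      funext j
      rw [dif_pos j.2]
  · -- positive coefficients ⊆ intrinsic interior
    rintro ⟨αn, hpos, hxeq⟩
    set β : PsiAux.Jty n → ℝ := fun j => αn (j : ℕ) with hβ
    have hβpos : ∀ j : PsiAux.Jty n, 0 < β j := fun j => hpos _ j.2
    have hxT : x = PsiAux.Tmap n β := by
      rw [hxeq, ← PsiAux.Tmap_apply' αn]
    have hxC : x ∈ C := ⟨β, fun j => (hβpos j).le, hxT.symm⟩
    have hxSp : x ∈ affineSpan ℝ C := subset_affineSpan ℝ C hxC
    rw [mem_intrinsicInterior]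
    refine ⟨⟨x, hxSp⟩, ?_, rfl⟩
    set U : Set (affineSpan ℝ C) :=
      ⋂ j : PsiAux.Jty n,
        {z : affineSpan ℝ C |
          PsiAux.bmap n (j : ℕ) (fun _ => 1) < PsiAux.bmap n (j : ℕ) (z : Fin n → ℝ)} with hU
    have hUopen : IsOpen U := by
      apply isOpen_iInter_of_finite
      intro j
      exact IsOpen.preimage
        ((PsiAux.bmap n (j : ℕ)).continuous_of_finiteDimensional.comp continuous_subtype_val)
        isOpen_Ioi
    have hxU : (⟨x, hxSp⟩ : affineSpan ℝ C) ∈ U := by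
      rw [hU, Set.mem_iInter]
      intro j
      show PsiAux.bmap n (j : ℕ) (fun _ => 1) < PsiAux.bmap n (j : ℕ) x
      rw [hxT, PsiAux.bmap_Tmap hn β j]
      have h1 := hβpos j
      linarith
    have hUC : U ⊆ Subtype.val ⁻¹' C := by
      intro z hz
      have hzA : PsiAux.gmap n (z : Fin n → ℝ) = PsiAux.gmap n (fun _ => 1) :=
        PsiAux.mem_Asub.mp (hle z.2)
      have hrep := PsiAux.rep_of_gmap _ hzA
      refine ⟨fun j => PsiAux.bmap n (j : ℕ) (z : Fin n → ℝ)
        - PsiAux.bmap n (j : ℕ) (fun _ => 1), fun j => ?_, hrep.symm⟩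
      have hj := Set.mem_iInter.mp hz j
      rw [Set.mem_setOf_eq] at hj
      show (0:ℝ) ≤ PsiAux.bmap n (j : ℕ) (z : Fin n → ℝ) - PsiAux.bmap n (j : ℕ) (fun _ => 1)
      linarith
    exact interior_maximal hUC hUopen hxU

end
end

section
/- Let G be the path graph on vertices v_1, v_2, …, v_n (n ≥ 2, with v_j adjacent to v_{j+1} for 1 ≤ j ≤ n−1), with v_out = v_1 and v_in = v_n. Then for every proper walk ω from v_in to v_out, there exist nonnegative integers α_2, …, α_{n−1} such that tr_ω = 𝟙 + Σ_{j=2}^{n−1} α_j f_j, where f_j = e_j + e_{j+1} and 𝟙 is the all-ones vector in ℝ^n. -/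
open scoped Classical

noncomputable section

lemma sum_pathF_apply (n : ℕ) (α : ℕ → ℕ) (i : Fin n) :
    (∑ j ∈ Finset.Icc 2 (n - 1), (α j : ℝ) • pathF n j) i
    = (if 2 ≤ (i : ℕ) + 1 ∧ (i : ℕ) + 1 ≤ n - 1 then (α ((i : ℕ) + 1) : ℝ) else 0)
      + (if 2 ≤ (i : ℕ) ∧ (i : ℕ) ≤ n - 1 then (α (i : ℕ) : ℝ) else 0) := by
  simp only [Finset.sum_apply, Pi.smul_apply, pathF, smul_eq_mul, mul_add, mul_ite, mul_one,
    mul_zero, add_left_inj]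
  rw [Finset.sum_add_distrib, Finset.sum_ite_eq, Finset.sum_ite_eq]
  simp only [Finset.mem_Icc]

lemma trace_aux (n : ℕ) (a c : Fin n)
    (ω : (SimpleGraph.pathGraph n).Walk a c) :
    (c : ℕ) = 0 →
    ω.support.count c = 1 →
    ∃ α : ℕ → ℕ, trace ω =
      ((fun i : Fin n => if (i : ℕ) ≤ (a : ℕ) then (1 : ℝ) else 0)
        + ∑ j ∈ Finset.Icc 2 (n - 1), (α j : ℝ) • pathF n j : Fin n → ℝ) := by
  induction ω with
  | nil =>
      rename_i w
      intro hc _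
      refine ⟨fun _ => 0, ?_⟩
      funext i
      have hi := i.isLt
      simp only [trace, SimpleGraph.Walk.support_nil, Pi.add_apply, sum_pathF_apply,
        List.count_singleton, Nat.cast_zero, add_zero, beq_iff_eq, Fin.ext_iff]
      split_ifs <;> first | omega | norm_num
  | @cons u v w h p ih =>
      intro hc hω
      rw [SimpleGraph.Walk.support_cons, List.count_cons] at hω
      have hmem : w ∈ p.support := p.end_mem_support
      have hcnt : 1 ≤ p.support.count w := List.count_pos_iff.mpr hmem
      have hu0 : u ≠ w := by
        intro he
        simp [he] at hω
        omega
      have hp1 : p.support.count w = 1 := by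
        simp only [beq_iff_eq, if_neg hu0, add_zero] at hω
        exact hω
      obtain ⟨α, hα⟩ := ih hc hp1
      have huv := SimpleGraph.pathGraph_adj.mp h
      have hu : (u : ℕ) ≠ 0 := fun h0 => hu0 (Fin.ext (h0.trans hc.symm))
      have hiu := u.isLt
      have hiv := v.isLt
      rcases huv with hup | hdown
      · -- up step: u + 1 = v
        refine ⟨fun j => if j = (v : ℕ) then α j + 1 else α j, ?_⟩
        funext i
        have hi := i.isLt
        have htr : trace (SimpleGraph.Walk.cons h p) i
            = (if u = i then 1 else 0) + trace p i := by
          simp only [trace, SimpleGraph.Walk.support_cons, List.count_cons]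
          split_ifs with h1 h2 h2 <;> simp_all <;> push_cast <;> ring
        rw [Pi.add_apply, sum_pathF_apply, htr, hα]
        simp only [Pi.add_apply, sum_pathF_apply]
        simp only [Fin.ext_iff]
        push_cast
        split_ifs <;> first | omega | (push_cast; ring)
      · -- down step: v + 1 = u
        refine ⟨α, ?_⟩
        funext i
        have hi := i.isLt
        have htr : trace (SimpleGraph.Walk.cons h p) i
            = (if u = i then 1 else 0) + trace p i := by
          simp only [trace, SimpleGraph.Walk.support_cons, List.count_cons]
          split_ifs with h1 h2 h2 <;> simp_all <;> push_cast <;> ring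
        rw [Pi.add_apply, sum_pathF_apply, htr, hα]
        simp only [Pi.add_apply, sum_pathF_apply]
        simp only [Fin.ext_iff]
        split_ifs <;> first | omega | (push_cast; ring)

/-- For the path graph on `v_1, …, v_n` with `vout = v_1`, `vin = v_n`, the trace of any
proper walk is of the form `𝟙 + Σ_{j=2}^{n-1} α_j f_j` with nonnegative integers `α_j`. -/
theorem trace_pathGraph_eq (n : ℕ) (hn : 2 ≤ n)
    (ω : (SimpleGraph.pathGraph n).Walk ⟨n - 1, by omega⟩ ⟨0, by omega⟩)
    (hω : IsProper ω) :
    ∃ α : ℕ → ℕ, trace ω =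
      (fun _ => 1) + ∑ j ∈ Finset.Icc 2 (n - 1), (α j : ℝ) • pathF n j := by
  obtain ⟨α, hα⟩ := trace_aux n _ _ ω rfl hω
  refine ⟨α, ?_⟩
  rw [hα]
  congr 1
  funext i
  have hi := i.isLt
  simp only []
  rw [if_pos (by omega)]


end
end
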